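/- arXiv:0911.0240 — 2 statements merged into one kernel-verified Lean document; each statement's English description precedes it below -/
import Mathlib

section
/- Lemma 3.8 (estimate from above for R^ε, integral curvature game). Let K satisfy the stated kernel conditions, let φ : (0,T]×ℝ^N → ℝ be bounded and C², and let (t₀,x₀) ∈ (0,T)×ℝ^N. There exists o : (0,1)×(0,1) → [0,∞) with o(ε,r) → 0 as (ε,r) → (0,0) such that for all sufficiently small ε, r > 0 and all (t,x) in the ball B_r(t₀,x₀), at least one of the following holds: (i) R^ε[φ](t,x) − φ(t,x) ≤ ε²·(∂_tφ(t₀,x₀) + o(ε,r)); (ii) D_xφ(t₀,x₀) = 0 and there exists (y,ψ) ∈ C^+(x) with R^ε[φ](t,x) − φ(t,x) ≤ T_P(y,ψ)·(∂_tφ(t₀,x₀) + o(ε,r)); (iii) D_xφ(t₀,x₀) ≠ 0, κ*[x₀,φ(t₀,·)] ≥ 0, and there exists (y,ψ) ∈ C^+(x) with Dψ(y) ≠ 0, 0 < κ*[y,ψ] ≤ κ*[x₀,φ(t₀,·)] + o(ε,r), T_P(y,ψ) = min(ε/κ*[y,ψ], ε^{1/2}), and R^ε[φ](t,x) − φ(t,x)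 ≤ T_P(y,ψ)·(∂_tφ(t₀,x₀) + κ*[x₀,φ(t₀,·)]·|D_xφ(t₀,x₀)| + o(ε,r)). -/
open MeasureTheory Metric Set Filter Topology RealInnerProductSpace

noncomputable section

attribute [local instance] Classical.propDecidable

/-- ℝ^N. -/
abbrev Euc (N : ℕ) := EuclideanSpace ℝ (Fin N)

/-- The paraboloid `Q(r,e) = {z : r|z·e| ≤ |z − (z·e)e|²}`. -/
def parab {N : ℕ} (r : ℝ) (e : Euc N) : Set (Euc N) :=
  {z | r * |⟪z, e⟫| ≤ ‖z - ⟪z, e⟫ • e‖ ^ 2}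

/-- The conditions on the interaction kernel `K`. -/
def KernelOK {N : ℕ} (R : ℝ) (K : Euc N → ℝ) : Prop :=
  (∀ z, 0 ≤ K z) ∧ (∀ z, K (-z) = K z) ∧ Function.support K ⊆ ball (0 : Euc N) R ∧
  -- K ∈ W^{1,1}(ℝ^N ∖ B_δ(0)) for every δ > 0
  (∀ δ > (0:ℝ), IntegrableOn K ((ball (0 : Euc N) δ)ᶜ) volume ∧
    DifferentiableOn ℝ K ((closedBall (0 : Euc N) δ)ᶜ) ∧
    IntegrableOn (fun z => ‖fderiv ℝ K z‖) ((ball (0 : Euc N) δ)ᶜ) volume) ∧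
  -- ∫_{B_δ(0)} K = o(1/δ)
  (∀ δ > (0:ℝ), IntegrableOn K (ball (0 : Euc N) δ) volume) ∧
  Tendsto (fun δ : ℝ => δ * ∫ z in ball (0 : Euc N) δ, K z) (𝓝[>] 0) (𝓝 0) ∧
  -- ∫_{Q(r,e)} K < ∞ for all r > 0 and ∫_{Q(r,e)} K = o(1/r)
  (∀ e : Euc N, ‖e‖ = 1 →
    (∀ r > (0:ℝ), IntegrableOn K (parab r e) volume) ∧
    Tendsto (fun r : ℝ => r * ∫ z in parab r e, K z) (𝓝[>] 0) (𝓝 0))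

/-- The upper integral curvature `κ*[x,U]`, defined as a principal value. -/
def kSt {N : ℕ} (K : Euc N → ℝ) (U : Euc N → ℝ) (x : Euc N) : ℝ :=
  limUnder (𝓝[>] (0:ℝ)) (fun δ =>
    ∫ z in (ball (0 : Euc N) δ)ᶜ, K z * (if U x ≤ U (x + z) then (1:ℝ) else -1))

/-- The lower integral curvature `κ_*[x,U]`, defined as a principal value. -/
def kLo {N : ℕ} (K : Euc N → ℝ) (U : Euc N → ℝ) (x : Euc N) : ℝ :=
  limUnder (𝓝[>] (0:ℝ)) (fun δ =>
    ∫ z in (ball (0 : Euc N) δ)ᶜ, K z * (if U x < U (x + z) then (1:ℝ) else -1))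

/-- The cut-off function `C_ε(r) = (r ∨ ε^{3/2}) ∧ ε^{1/2}`. -/
def cutC (ε r : ℝ) : ℝ := min (max r (ε ^ ((3:ℝ)/2))) (ε ^ ((1:ℝ)/2))

/-- Paul's time increment `T_P(y,ψ)`. -/
def TPg {N : ℕ} (K : Euc N → ℝ) (ε : ℝ) (y : Euc N) (ψ : Euc N → ℝ) : ℝ :=
  if gradient ψ y ≠ 0 ∧ 0 < kSt K ψ y then cutC ε (ε / kSt K ψ y) else ε ^ 2

/-- Carol's time increment `T_C(y,ψ)`. -/
def TCg {N : ℕ} (K : Euc N → ℝ) (ε : ℝ) (y : Euc N) (ψ : Euc N → ℝ) : ℝ :=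
  if gradient ψ y ≠ 0 ∧ kLo K ψ y < 0 then cutC ε (ε / |kLo K ψ y|) else ε ^ 2

/-- Admissible choices `C^+(x)` of a point and a hypersurface. -/
def Cplus {N : ℕ} (ε : ℝ) (x : Euc N) : Set (Euc N × (Euc N → ℝ)) :=
  {p | p.1 ∈ ball x ε ∧ ContDiff ℝ 2 p.2 ∧ p.2 x ≤ p.2 p.1}

/-- Admissible choices `C^-(x)` of a point and a hypersurface. -/
def Cminus {N : ℕ} (ε : ℝ) (x : Euc N) : Set (Euc N × (Euc N → ℝ)) :=
  {p | p.1 ∈ ball x ε ∧ ContDiff ℝ 2 p.2 ∧ p.2 p.1 ≤ p.2 x}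

/-- The target set `P^+(x,y,ψ)`. -/
def Pplus {N : ℕ} (K : Euc N → ℝ) (R : ℝ) (x y : Euc N) (ψ : Euc N → ℝ) : Set (Euc N) :=
  if gradient ψ y ≠ 0 ∧ 0 < kSt K ψ y then {z | z ∈ ball y R ∧ ψ y ≤ ψ z} else {x}

/-- The target set `P^-(x,y,ψ)`. -/
def Pminus {N : ℕ} (K : Euc N → ℝ) (R : ℝ) (x y : Euc N) (ψ : Euc N → ℝ) : Set (Euc N) :=
  if gradient ψ y ≠ 0 ∧ kLo K ψ y < 0 then {z | z ∈ ball y R ∧ ψ z ≤ ψ y} else {x}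

/-- The operator `R^ε[φ]`. -/
def Rg {N : ℕ} (K : Euc N → ℝ) (R ε : ℝ) (φ : ℝ → Euc N → ℝ) (t : ℝ) (x : Euc N) : ℝ :=
  sSup ((fun p : Euc N × (Euc N → ℝ) =>
      sInf ((fun z => φ (t + TPg K ε p.1 p.2) z) '' Pplus K R x p.1 p.2)) '' Cplus ε x)

/-- The operator `R_ε[φ]`. -/
def Rgl {N : ℕ} (K : Euc N → ℝ) (R ε : ℝ) (φ : ℝ → Euc N → ℝ) (t : ℝ) (x : Euc N) : ℝ :=
  sInf ((fun p : Euc N × (Euc N → ℝ) =>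
      sSup ((fun z => φ (t + TCg K ε p.1 p.2) z) '' Pminus K R x p.1 p.2)) '' Cminus ε x)

/-- The one-step game operator `S^ε[φ] = R^ε[R_ε[φ]]` for the integral curvature game. -/
def Sg {N : ℕ} (K : Euc N → ℝ) (R ε : ℝ) (φ : ℝ → Euc N → ℝ) (t : ℝ) (x : Euc N) : ℝ :=
  Rg K R ε (fun s y => Rgl K R ε φ s y) t x

/-- Viscosity subsolution of `−∂_t u − κ[x,u]|Du| = 0` on `(0,T)×ℝ^N`. -/
def CurvSubsol {N : ℕ} (K : Euc N → ℝ) (R T : ℝ) (u : ℝ → Euc N → ℝ) : Prop :=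
  UpperSemicontinuousOn (fun p : ℝ × Euc N => u p.1 p.2) (Ioo (0:ℝ) T ×ˢ univ) ∧
  ∀ φ : ℝ → Euc N → ℝ,
    ContDiffOn ℝ 2 (fun p : ℝ × Euc N => φ p.1 p.2) (Ioo (0:ℝ) T ×ˢ univ) →
    ∀ t ∈ Ioo (0:ℝ) T, ∀ x : Euc N,
      -- u − φ attains a strict maximum on (0,T) × B_{R+1}(x) at (t,x)
      (∀ s ∈ Ioo (0:ℝ) T, ∀ y ∈ ball x (R + 1), (s, y) ≠ (t, x) →
        u s y - φ s y < u t x - φ t x) →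
      ((gradient (φ t) x ≠ 0 →
          -(deriv (fun s => φ s x) t) - kSt K (φ t) x * ‖gradient (φ t) x‖ ≤ 0) ∧
       (gradient (φ t) x = 0 → -(deriv (fun s => φ s x) t) ≤ 0))

/-- Viscosity supersolution of `−∂_t u − κ[x,u]|Du| = 0` on `(0,T)×ℝ^N`. -/
def CurvSupersol {N : ℕ} (K : Euc N → ℝ) (R T : ℝ) (u : ℝ → Euc N → ℝ) : Prop :=
  LowerSemicontinuousOn (fun p : ℝ × Euc N => u p.1 p.2) (Ioo (0:ℝ) T ×ˢ univ) ∧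
  ∀ φ : ℝ → Euc N → ℝ,
    ContDiffOn ℝ 2 (fun p : ℝ × Euc N => φ p.1 p.2) (Ioo (0:ℝ) T ×ˢ univ) →
    ∀ t ∈ Ioo (0:ℝ) T, ∀ x : Euc N,
      -- u − φ attains a strict minimum on (0,T) × B_{R+1}(x) at (t,x)
      (∀ s ∈ Ioo (0:ℝ) T, ∀ y ∈ ball x (R + 1), (s, y) ≠ (t, x) →
        u t x - φ t x < u s y - φ s y) →
      ((gradient (φ t) x ≠ 0 →
          0 ≤ -(deriv (fun s => φ s x) t) - kLo K (φ t) x * ‖gradient (φ t) x‖) ∧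
       (gradient (φ t) x = 0 → 0 ≤ -(deriv (fun s => φ s x) t)))

/-- Upper relaxed semi-limit `limsup* u^ε`. -/
def relaxSup {N : ℕ} (u : ℝ → ℝ → Euc N → ℝ) (t : ℝ) (x : Euc N) : ℝ :=
  sInf {a | ∃ δ > (0:ℝ), a = sSup ((fun q : ℝ × ℝ × Euc N => u q.1 q.2.1 q.2.2) ''
    {q | 0 < q.1 ∧ q.1 < δ ∧ |q.2.1 - t| < δ ∧ dist q.2.2 x < δ})}

/-- Lower relaxed semi-limit `liminf* u^ε`. -/
def relaxInf {N : ℕ} (u : ℝ → ℝ → Euc N → ℝ) (t : ℝ) (x : Euc N) : ℝ :=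
  sSup {a | ∃ δ > (0:ℝ), a = sInf ((fun q : ℝ × ℝ × Euc N => u q.1 q.2.1 q.2.2) ''
    {q | 0 < q.1 ∧ q.1 < δ ∧ |q.2.1 - t| < δ ∧ dist q.2.2 x < δ})}

namespace Lem38

lemma integrable_K {N : ℕ} {R : ℝ} {K : Euc N → ℝ} (hK : KernelOK R K) :
    Integrable K (volume : Measure (Euc N)) := by
  have h1 := hK.2.2.2.2.1 1 one_pos
  have h2 := (hK.2.2.2.1 1 one_pos).1
  have h3 : IntegrableOn K (ball (0:Euc N) 1 ∪ (ball (0:Euc N) 1)ᶜ) volume := h1.union h2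
  rwa [Set.union_compl_self, integrableOn_univ] at h3

lemma Kst_int_nonneg {N : ℕ} {R : ℝ} {K : Euc N → ℝ} (hK : KernelOK R K) : 0 ≤ ∫ z, K z :=
  integral_nonneg hK.1

/-- integrability of `K · σ` for bounded measurable `σ`. -/
lemma int_mul_bdd {N : ℕ} {K : Euc N → ℝ} {s : Set (Euc N)}
    (h : IntegrableOn K s volume) {σ : Euc N → ℝ} (hσ : Measurable σ)
    (hb : ∀ z, |σ z| ≤ 1) : IntegrableOn (fun z => K z * σ z) s volume := by
  have := h.bdd_mul (hσ.aestronglyMeasurable.restrict) (Filter.Eventually.of_forall (fun z => by simpa using hb z) : ∀ᵐ z ∂(volume.restrict s), ‖σ z‖ ≤ 1)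
  simpa [mul_comm, IntegrableOn] using this

lemma meas_sigma {N : ℕ} {ψ : Euc N → ℝ} (hψ : Continuous ψ) (y : Euc N) :
    Measurable (fun z : Euc N => if ψ y ≤ ψ (y + z) then (1:ℝ) else -1) := by
  refine Measurable.ite ?_ measurable_const measurable_const
  have : IsClosed {z : Euc N | ψ y ≤ ψ (y + z)} :=
    isClosed_le continuous_const (hψ.comp (continuous_const.add continuous_id))
  exact this.measurableSet

lemma hyperplane_null {N : ℕ} {n : Euc N} (hn : n ≠ 0) :
    volume {z : Euc N | (inner ℝ n z : ℝ) = 0} = 0 := by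
  have hset : {z : Euc N | (inner ℝ n z : ℝ) = 0} =
      (LinearMap.ker ((innerSL ℝ n : Euc N →L[ℝ] ℝ) : Euc N →ₗ[ℝ] ℝ) : Set (Euc N)) := by
    ext z; simp [LinearMap.mem_ker]
  rw [hset]
  refine Measure.addHaar_submodule _ _ ?_
  intro htop
  apply hn
  have hmem : n ∈ LinearMap.ker ((innerSL ℝ n : Euc N →L[ℝ] ℝ) : Euc N →ₗ[ℝ] ℝ) := by
    rw [htop]; trivial
  have : (inner ℝ n n : ℝ) = 0 := by simpa using hmem
  exact inner_self_eq_zero.mp this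

end Lem38
namespace Lem38

/-- Second-order Taylor bound for a `C²` function. -/
lemma sq_bound {N : ℕ} {ψ : Euc N → ℝ} (hψ : ContDiff ℝ 2 ψ) (y : Euc N) :
    ∃ C > (0:ℝ), ∀ z : Euc N, ‖z‖ ≤ 1 →
      |ψ (y + z) - ψ y - (inner ℝ (gradient ψ y) z : ℝ)| ≤ C * ‖z‖ ^ 2 := by
  have hψ1 : ContDiff ℝ 1 (fderiv ℝ ψ) := hψ.fderiv_right (by norm_num)
  have hc : Continuous (fderiv ℝ (fderiv ℝ ψ)) := hψ1.continuous_fderiv (by norm_num)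
  obtain ⟨L, hL⟩ := (isCompact_closedBall y 1).exists_bound_of_continuousOn (f := fderiv ℝ (fderiv ℝ ψ)) hc.continuousOn
  have hF : ∀ w ∈ closedBall y 1, ‖fderiv ℝ ψ w - fderiv ℝ ψ y‖ ≤ (max L 0) * ‖w - y‖ := by
    intro w hw
    refine Convex.norm_image_sub_le_of_norm_hasFDerivWithin_le
      (fun u hu => ((hψ1.differentiable (by norm_num)) u).hasFDerivAt.hasFDerivWithinAt)
      (fun u hu => (hL u hu).trans (le_max_left _ _)) (convex_closedBall y 1) (mem_closedBall_self zero_le_one) hw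
  refine ⟨max L 0 + 1, by positivity, fun z hz => ?_⟩
  have hmem : y + z ∈ closedBall y ‖z‖ := by
    simp [mem_closedBall, dist_eq_norm]
  have hsub : closedBall y ‖z‖ ⊆ closedBall y 1 := closedBall_subset_closedBall hz
  have hder : ∀ u ∈ closedBall y ‖z‖, HasFDerivWithinAt ψ (fderiv ℝ ψ u) (closedBall y ‖z‖) u :=
    fun u hu => ((hψ.differentiable (by norm_num)) u).hasFDerivAt.hasFDerivWithinAt
  have hbd : ∀ u ∈ closedBall y ‖z‖, ‖fderiv ℝ ψ u - fderiv ℝ ψ y‖ ≤ (max L 0 + 1) * ‖z‖ := by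
    intro u hu
    have h1 := hF u (hsub hu)
    have h2 : ‖u - y‖ ≤ ‖z‖ := by simpa [dist_eq_norm] using hu
    calc ‖fderiv ℝ ψ u - fderiv ℝ ψ y‖ ≤ (max L 0) * ‖u - y‖ := h1
    _ ≤ (max L 0) * ‖z‖ := by
        exact mul_le_mul_of_nonneg_left h2 (le_max_right _ _)
    _ ≤ (max L 0 + 1) * ‖z‖ := by nlinarith [norm_nonneg z]
  have := Convex.norm_image_sub_le_of_norm_hasFDerivWithin_le' hder hbd
    (convex_closedBall y ‖z‖) (mem_closedBall_self (norm_nonneg z)) hmem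
  have hgrad : (fderiv ℝ ψ y) ((y+z) - y) = (inner ℝ (gradient ψ y) z : ℝ) := by
    rw [gradient]
    rw [InnerProductSpace.toDual_symm_apply]
    congr 1
    abel
  rw [hgrad] at this
  calc |ψ (y + z) - ψ y - (inner ℝ (gradient ψ y) z : ℝ)| ≤ (max L 0 + 1) * ‖z‖ * ‖(y+z) - y‖ := by
        simpa using this
  _ = (max L 0 + 1) * ‖z‖ ^ 2 := by
      have : (y+z) - y = z := by abel
      rw [this]; ring

/-- Points where the sign of `ψ` around `y` differs from the linear sign lie in a paraboloid. -/
lemma mem_parab_of {N : ℕ} {n : Euc N} (hn : n ≠ 0) {C : ℝ} (hC : 0 < C) {z : Euc N}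
    (hz : ‖z‖ ≤ ‖n‖ / (2*C)) (h2 : |(inner ℝ n z : ℝ)| ≤ C * ‖z‖ ^ 2) :
    z ∈ parab (‖n‖ / (2*C)) (‖n‖⁻¹ • n) := by
  have hnn : (0:ℝ) < ‖n‖ := norm_pos_iff.mpr hn
  set e : Euc N := ‖n‖⁻¹ • n with he
  have hee : ‖e‖ = 1 := norm_smul_inv_norm hn
  set p : ℝ := (inner ℝ z e : ℝ) with hp
  have hpz : (inner ℝ n z : ℝ) = ‖n‖ * p := by
    rw [hp, he, real_inner_smul_right, real_inner_comm]
    field_simp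
  have horth : (inner ℝ (z - p • e) e : ℝ) = 0 := by
    rw [inner_sub_left, real_inner_smul_left, real_inner_self_eq_norm_sq, hee]
    simp [hp]
  have hpyth : ‖z‖ ^ 2 = ‖z - p • e‖ ^ 2 + p ^ 2 := by
    have hzz : z = (z - p • e) + p • e := by abel
    have := norm_add_sq_real (z - p • e) (p • e)
    rw [← hzz] at this
    rw [this, real_inner_smul_right, horth]
    rw [norm_smul, hee]
    simp [mul_pow]
  have hple : |p| ≤ ‖z‖ := by
    calc |p| = |(inner ℝ z e : ℝ)| := rfl
    _ ≤ ‖z‖ * ‖e‖ := abs_real_inner_le_norm z e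
    _ = ‖z‖ := by rw [hee, mul_one]
  have key : ‖n‖ * |p| ≤ C * ‖z - p • e‖ ^ 2 + C * p ^ 2 := by
    have : |(inner ℝ n z : ℝ)| = ‖n‖ * |p| := by
      rw [hpz, abs_mul, abs_of_pos hnn]
    rw [this] at h2
    rw [hpyth] at h2
    linarith
  have hp2 : C * p ^ 2 ≤ (‖n‖ / 2) * |p| := by
    have : p ^ 2 = |p| * |p| := by rw [← abs_mul, ← sq, abs_of_nonneg (sq_nonneg p)]
    rw [this]
    have h3 : |p| ≤ ‖n‖ / (2*C) := hple.trans hz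
    calc C * (|p| * |p|) ≤ C * ((‖n‖/(2*C)) * |p|) := by
          apply mul_le_mul_of_nonneg_left (mul_le_mul_of_nonneg_right h3 (abs_nonneg p)) hC.le
    _ = (‖n‖ / 2) * |p| := by
        field_simp
  show ‖n‖ / (2*C) * |(inner ℝ z e : ℝ)| ≤ ‖z - (inner ℝ z e : ℝ) • e‖ ^ 2
  rw [← hp]
  have : (‖n‖ / 2) * |p| ≤ C * ‖z - p • e‖ ^ 2 := by linarith
  calc ‖n‖ / (2*C) * |p| = (1/C) * ((‖n‖/2) * |p|) := by
        field_simp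
  _ ≤ (1/C) * (C * ‖z - p • e‖ ^ 2) := by
      apply mul_le_mul_of_nonneg_left this (by positivity)
  _ = ‖z - p • e‖ ^ 2 := by field_simp

end Lem38
namespace Lem38
set_option maxHeartbeats 1000000

lemma annulus_decomp {N : ℕ} {δ' δ : ℝ} (h : δ' ≤ δ) :
    (ball (0:Euc N) δ')ᶜ = (ball (0:Euc N) δ)ᶜ ∪ (ball (0:Euc N) δ \ ball (0:Euc N) δ') := by
  ext z
  simp only [mem_union, mem_compl_iff, mem_ball_zero_iff, mem_diff, not_lt]
  constructor
  · intro hz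
    rcases le_or_gt δ ‖z‖ with h1 | h1
    · exact Or.inl h1
    · exact Or.inr ⟨h1, hz⟩
  · rintro (h1 | ⟨h1, h2⟩)
    · exact h.trans h1
    · exact h2

lemma meas_hsign {N : ℕ} (n : Euc N) :
    Measurable (fun z : Euc N => if 0 ≤ (inner ℝ n z : ℝ) then (1:ℝ) else -1) := by
  refine Measurable.ite ?_ measurable_const measurable_const
  exact (isClosed_le continuous_const (continuous_const.inner continuous_id)).measurableSet

lemma odd_zero {N : ℕ} {R : ℝ} {K : Euc N → ℝ} (hK : KernelOK R K) {n : Euc N} (hn : n ≠ 0)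
    {s : Set (Euc N)} (hsym : ∀ z, z ∈ s ↔ -z ∈ s) (hsm : MeasurableSet s)
    (hint : IntegrableOn K s volume) :
    ∫ z in s, K z * (if 0 ≤ (inner ℝ n z : ℝ) then (1:ℝ) else -1) = 0 := by
  set h : Euc N → ℝ := fun z => if 0 ≤ (inner ℝ n z : ℝ) then (1:ℝ) else -1 with hh
  have hb : ∀ z, |h z| ≤ 1 := by
    intro z; rw [hh]; dsimp only; split <;> simp
  set f : Euc N → ℝ := s.indicator (fun z => K z * h z) with hf
  have hfint : Integrable f volume :=
    (integrable_indicator_iff hsm).mpr (int_mul_bdd hint (meas_hsign n) hb)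
  have h1 : ∫ z in s, K z * h z = ∫ z, f z := (integral_indicator hsm).symm
  have h2 : ∫ z, f z = ∫ z, f (-z) := (integral_neg_eq_self f volume).symm
  have hae : ∀ᵐ z : Euc N, (inner ℝ n z : ℝ) ≠ 0 := by
    rw [ae_iff]
    simpa using hyperplane_null hn
  have h3 : ∀ᵐ z : Euc N, f (-z) = - f z := by
    filter_upwards [hae] with z hz
    by_cases hzs : z ∈ s
    · have hzs' : -z ∈ s := (hsym z).mp hzs
      rw [hf]
      rw [Set.indicator_of_mem hzs', Set.indicator_of_mem hzs]
      rw [hK.2.1 z]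
      have : h (-z) = - h z := by
        rw [hh]; dsimp only
        rw [inner_neg_right]
        rcases lt_or_gt_of_ne hz with hlt | hgt
        · rw [if_pos (neg_nonneg.mpr hlt.le), if_neg (not_le.mpr hlt)]; norm_num
        · rw [if_neg (not_le.mpr (by linarith : -(inner ℝ n z : ℝ) < 0)), if_pos hgt.le]
      rw [this]; ring
    · have hzs' : ¬ (-z ∈ s) := fun hmem => hzs ((hsym z).mpr hmem)
      rw [hf, Set.indicator_of_notMem hzs', Set.indicator_of_notMem hzs]
      simp
  have h4 : ∫ z, f (-z) = ∫ z, (- f) z := integral_congr_ae h3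
  have h5 : ∫ z, (- f) z = - ∫ z, f z := by
    simpa using integral_neg f
  have hcontr : ∫ z, f z = - ∫ z, f z := by
    calc ∫ z, f z = ∫ z, f (-z) := h2
    _ = ∫ z, (- f) z := h4
    _ = - ∫ z, f z := h5
  have hzero : ∫ z, f z = 0 := by linarith
  rw [h1, hzero]

lemma parab_closed {N : ℕ} (r : ℝ) (e : Euc N) : MeasurableSet (parab r e) := by
  have : IsClosed (parab r e) := by
    apply isClosed_le
    · exact (continuous_const.mul ((continuous_id.inner continuous_const).abs))
    · fun_prop
  exact this.measurableSet

/-- Existence of the principal value defining `kSt`. -/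
lemma pv_tendsto {N : ℕ} {R : ℝ} (hR : 0 < R) {K : Euc N → ℝ} (hK : KernelOK R K)
    {ψ : Euc N → ℝ} (hψ : ContDiff ℝ 2 ψ) {y : Euc N} (hy : gradient ψ y ≠ 0) :
    Tendsto (fun δ => ∫ z in (ball (0:Euc N) δ)ᶜ,
        K z * (if ψ y ≤ ψ (y + z) then (1:ℝ) else -1))
      (𝓝[>] (0:ℝ)) (𝓝 (kSt K ψ y)) := by
  classical
  set n := gradient ψ y with hngrad
  obtain ⟨C, hC, hTay⟩ := sq_bound hψ y
  set e : Euc N := ‖n‖⁻¹ • n with he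
  have hee : ‖e‖ = 1 := norm_smul_inv_norm hy
  set r₁ : ℝ := ‖n‖ / (2*C) with hr₁
  have hnn : (0:ℝ) < ‖n‖ := norm_pos_iff.mpr hy
  have hr₁pos : 0 < r₁ := by positivity
  set δ₀ : ℝ := min 1 r₁ with hδ₀def
  have hδ₀ : 0 < δ₀ := lt_min one_pos hr₁pos
  set σ : Euc N → ℝ := fun z => if ψ y ≤ ψ (y + z) then (1:ℝ) else -1 with hσdef
  have hσm : Measurable σ := meas_sigma hψ.continuous y
  have hσb : ∀ z, |σ z| ≤ 1 := by
    intro z; rw [hσdef]; dsimp only; split <;> simp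
  set hsgn : Euc N → ℝ := fun z => if 0 ≤ (inner ℝ n z : ℝ) then (1:ℝ) else -1 with hsgndef
  have hhm : Measurable hsgn := meas_hsign n
  have hhb : ∀ z, |hsgn z| ≤ 1 := by
    intro z; rw [hsgndef]; dsimp only; split <;> simp
  -- difference set lies in the paraboloid
  have hdiffset : ∀ z : Euc N, ‖z‖ ≤ δ₀ → σ z ≠ hsgn z → z ∈ parab r₁ e := by
    intro z hz hne
    have h1 : ‖z‖ ≤ 1 := hz.trans (min_le_left _ _)
    have hb := hTay z h1
    have hble := abs_le.mp hb
    have habs : |(inner ℝ n z : ℝ)| ≤ C * ‖z‖ ^ 2 := by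
      by_cases hcase : 0 ≤ (inner ℝ n z : ℝ)
      · have hσz : ¬ (ψ y ≤ ψ (y+z)) := by
          intro hle
          apply hne
          rw [hσdef, hsgndef]; dsimp only
          rw [if_pos hle, if_pos hcase]
        have ht : ψ (y+z) - ψ y < 0 := sub_neg.mpr (lt_of_not_ge hσz)
        rw [abs_of_nonneg hcase]
        have := hble.1
        linarith
      · have hσz : ψ y ≤ ψ (y+z) := by
          by_contra hcon
          apply hne
          rw [hσdef, hsgndef]; dsimp only
          rw [if_neg hcon, if_neg hcase]
        have ht : 0 ≤ ψ (y+z) - ψ y := sub_nonneg.mpr hσz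
        rw [abs_of_neg (lt_of_not_ge hcase)]
        have := hble.2
        linarith
    exact mem_parab_of hy hC (hz.trans (min_le_right _ _)) habs
  have hKcpl : ∀ δ : ℝ, 0 < δ → IntegrableOn K ((ball (0:Euc N) δ)ᶜ) volume :=
    fun δ hδ => (hK.2.2.2.1 δ hδ).1
  have hparab_int : IntegrableOn K (parab r₁ e) volume := (hK.2.2.2.2.2.2 e hee).1 r₁ hr₁pos
  have hparab_meas : MeasurableSet (parab r₁ e) := parab_closed r₁ e
  set Gf : ℝ → ℝ := fun δ => ∫ z in parab r₁ e ∩ ball (0:Euc N) δ, K z with hGfdef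
  have hGf_mono : ∀ δ₁ δ₂ : ℝ, δ₁ ≤ δ₂ → Gf δ₁ ≤ Gf δ₂ := by
    intro δ₁ δ₂ hle
    apply setIntegral_mono_set (hparab_int.mono_set inter_subset_left)
    · filter_upwards with z using hK.1 z
    · exact HasSubset.Subset.eventuallyLE (inter_subset_inter_right _ (ball_subset_ball hle))
  have hGf_nonneg : ∀ δ, 0 ≤ Gf δ := by
    intro δ
    apply setIntegral_nonneg (hparab_meas.inter measurableSet_ball) (fun z _ => hK.1 z)
  -- annulus bound
  set F : ℝ → ℝ := fun δ => ∫ z in (ball (0:Euc N) δ)ᶜ, K z * σ z with hFdef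
  have hann : ∀ δ' δ : ℝ, 0 < δ' → δ' ≤ δ → δ ≤ δ₀ →
      |F δ' - F δ| ≤ 2 * Gf δ := by
    intro δ' δ h1 h2 h3
    set ann := ball (0:Euc N) δ \ ball (0:Euc N) δ' with hanndef
    have hann_meas : MeasurableSet ann := measurableSet_ball.diff measurableSet_ball
    have hann_sub : ann ⊆ (ball (0:Euc N) δ')ᶜ := fun z hz => hz.2
    have hint_ann : IntegrableOn K ann volume := (hKcpl δ' h1).mono_set hann_sub
    have hσ_int : IntegrableOn (fun z => K z * σ z) ann volume := int_mul_bdd hint_ann hσm hσb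
    have hh_int : IntegrableOn (fun z => K z * hsgn z) ann volume := int_mul_bdd hint_ann hhm hhb
    have hsym : ∀ z : Euc N, z ∈ ann ↔ -z ∈ ann := by
      intro z
      simp only [hanndef, mem_diff, mem_ball_zero_iff, norm_neg]
    have hzero : ∫ z in ann, K z * hsgn z = 0 := odd_zero hK hy hsym hann_meas hint_ann
    have hsplit : F δ' = F δ + ∫ z in ann, K z * σ z := by
      rw [hFdef]
      dsimp only
      rw [annulus_decomp h2]
      rw [setIntegral_union (disjoint_compl_left.mono_right diff_subset) hann_meas
        (int_mul_bdd (hKcpl δ (h1.trans_le h2)) hσm hσb) hσ_int]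
    have hptwise : ∀ z ∈ ann, |K z * σ z - K z * hsgn z| ≤
        2 * (parab r₁ e ∩ ball (0:Euc N) δ).indicator K z := by
      intro z hz
      by_cases hne : σ z = hsgn z
      · rw [hne, sub_self, abs_zero]
        have : 0 ≤ (parab r₁ e ∩ ball (0:Euc N) δ).indicator K z :=
          Set.indicator_nonneg (fun w _ => hK.1 w) z
        linarith
      · have hzball : ‖z‖ < δ := by
          have := hz.1
          rwa [mem_ball_zero_iff] at this
        have hzp : z ∈ parab r₁ e := hdiffset z (hzball.le.trans h3) hne
        have hmem : z ∈ parab r₁ e ∩ ball (0:Euc N) δ := ⟨hzp, hz.1⟩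
        rw [Set.indicator_of_mem hmem]
        have : |K z * σ z - K z * hsgn z| = K z * |σ z - hsgn z| := by
          rw [← mul_sub, abs_mul, abs_of_nonneg (hK.1 z)]
        rw [this]
        have h4 : |σ z - hsgn z| ≤ 2 := by
          have := hσb z; have := hhb z
          have h5 := abs_le.mp (hσb z); have h6 := abs_le.mp (hhb z)
          rw [abs_le]; constructor <;> linarith
        nlinarith [hK.1 z]
    have hind_int : IntegrableOn (fun z => 2 * (parab r₁ e ∩ ball (0:Euc N) δ).indicator K z)
        ann volume := by
      apply Integrable.integrableOn
      exact ((integrable_indicator_iff (hparab_meas.inter measurableSet_ball)).mpr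
        (hparab_int.mono_set inter_subset_left)).const_mul 2
    have hbig : |∫ z in ann, ((K z * σ z - K z * hsgn z) + K z * hsgn z)| ≤ 2 * Gf δ := by
      calc |∫ z in ann, ((K z * σ z - K z * hsgn z) + K z * hsgn z)| ≤
          |∫ z in ann, (K z * σ z - K z * hsgn z)| + |∫ z in ann, K z * hsgn z| := by
            have hsub_int : IntegrableOn (fun z => K z * σ z - K z * hsgn z) ann volume :=
              hσ_int.sub hh_int
            rw [integral_add hsub_int hh_int]
            exact abs_add_le _ _
      _ = |∫ z in ann, (K z * σ z - K z * hsgn z)| := by rw [hzero, abs_zero, add_zero]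
      _ ≤ ∫ z in ann, |K z * σ z - K z * hsgn z| := by
            simpa [Real.norm_eq_abs] using
              norm_integral_le_integral_norm (μ := volume.restrict ann)
                (f := fun z => K z * σ z - K z * hsgn z)
      _ ≤ ∫ z in ann, 2 * (parab r₁ e ∩ ball (0:Euc N) δ).indicator K z :=
            setIntegral_mono_on ((hσ_int.sub hh_int).abs) hind_int hann_meas hptwise
      _ ≤ ∫ z : Euc N, 2 * (parab r₁ e ∩ ball (0:Euc N) δ).indicator K z := by
            refine setIntegral_le_integral
              (((integrable_indicator_iff (hparab_meas.inter measurableSet_ball)).mpr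
                (hparab_int.mono_set inter_subset_left)).const_mul 2) ?_
            filter_upwards with z
            exact mul_nonneg (by norm_num) (Set.indicator_nonneg (fun w _ => hK.1 w) z)
      _ = 2 * Gf δ := by
            rw [integral_const_mul, integral_indicator (hparab_meas.inter measurableSet_ball)]
    have hbig' : |∫ z in ann, K z * σ z| ≤ 2 * Gf δ := by
      have hfun : (fun z => K z * σ z) = fun z => ((K z * σ z - K z * hsgn z) + K z * hsgn z) := by
        funext z; ring
      rw [hfun]
      exact hbig
    rw [hsplit]
    simpa using hbig'
  -- sequence of radii
  set dseq : ℕ → ℝ := fun k => δ₀ / (k+1) with hdseqdef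
  have hdpos : ∀ k : ℕ, 0 < dseq k := fun k => div_pos hδ₀ (by positivity)
  have hdle : ∀ k : ℕ, dseq k ≤ δ₀ := by
    intro k
    rw [hdseqdef]
    dsimp only
    rw [div_le_iff₀ (by positivity)]
    nlinarith [hδ₀, Nat.cast_nonneg (α := ℝ) k]
  have hdanti : ∀ j k : ℕ, j ≤ k → dseq k ≤ dseq j := by
    intro j k hjk
    rw [hdseqdef]
    dsimp only
    rw [div_le_div_iff₀ (by positivity) (by positivity)]
    have hcast : (j:ℝ) ≤ (k:ℝ) := by exact_mod_cast hjk
    nlinarith [hδ₀.le]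
  have hzero_null : volume ({0} : Set (Euc N)) = 0 := by
    apply measure_mono_null _ (hyperplane_null hy)
    intro w hw
    simp only [mem_singleton_iff] at hw
    simp [hw]
  have hdseq_tendsto : Tendsto dseq atTop (𝓝 0) := by
    have h1 : Tendsto (fun k : ℕ => (1:ℝ) / (k+1)) atTop (𝓝 0) :=
      tendsto_one_div_add_atTop_nhds_zero_nat
    have := h1.const_mul δ₀
    simp only [mul_zero] at this
    apply this.congr
    intro k
    rw [hdseqdef]
    dsimp only
    ring
  have hGseq : Tendsto (fun k => Gf (dseq k)) atTop (𝓝 0) := by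
    have h0 : Tendsto
        (fun k => ∫ z : Euc N, ((parab r₁ e ∩ ball (0:Euc N) (dseq k)).indicator K) z)
        atTop (𝓝 (∫ z : Euc N, (0:ℝ))) := by
      apply tendsto_integral_of_dominated_convergence ((ball (0:Euc N) δ₀).indicator K)
      · intro k
        exact ((integrable_indicator_iff (hparab_meas.inter measurableSet_ball)).mpr
          (hparab_int.mono_set inter_subset_left)).aestronglyMeasurable
      · exact (integrable_indicator_iff measurableSet_ball).mpr (hK.2.2.2.2.1 δ₀ hδ₀)
      · intro k
        filter_upwards with z
        by_cases hz : z ∈ parab r₁ e ∩ ball (0:Euc N) (dseq k)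
        · have hz2 : z ∈ ball (0:Euc N) δ₀ := ball_subset_ball (hdle k) hz.2
          rw [Set.indicator_of_mem hz, Set.indicator_of_mem hz2, Real.norm_eq_abs,
            abs_of_nonneg (hK.1 z)]
        · rw [Set.indicator_of_notMem hz, norm_zero]
          exact Set.indicator_nonneg (fun w _ => hK.1 w) z
      · have hae0 : ∀ᵐ z : Euc N, z ≠ 0 := by
          rw [ae_iff]
          simpa using hzero_null
        filter_upwards [hae0] with z hz
        have hznz : (0:ℝ) < ‖z‖ := norm_pos_iff.mpr hz
        have hev : ∀ᶠ k in atTop, dseq k < ‖z‖ :=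
          hdseq_tendsto.eventually_lt_const hznz
        apply tendsto_const_nhds.congr'
        filter_upwards [hev] with k hk
        have : z ∉ parab r₁ e ∩ ball (0:Euc N) (dseq k) := by
          intro hmem
          rw [mem_inter_iff, mem_ball_zero_iff] at hmem
          linarith [hmem.2]
        rw [Set.indicator_of_notMem this]
    rw [integral_zero] at h0
    apply h0.congr
    intro k
    rw [integral_indicator (hparab_meas.inter measurableSet_ball)]
  have hcauchy : CauchySeq (fun k => F (dseq k)) := by
    apply cauchySeq_of_le_tendsto_0 (fun k => 2 * Gf (dseq k))
    · intro a b N ha hb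
      have hGN : ∀ c : ℕ, N ≤ c → Gf (dseq c) ≤ Gf (dseq N) :=
        fun c hc => hGf_mono _ _ (hdanti N c hc)
      rcases le_total (dseq a) (dseq b) with hc | hc
      · rw [Real.dist_eq]
        calc |F (dseq a) - F (dseq b)| ≤ 2 * Gf (dseq b) :=
              hann (dseq a) (dseq b) (hdpos a) hc (hdle b)
        _ ≤ 2 * Gf (dseq N) := by linarith [hGN b hb]
      · rw [Real.dist_eq, abs_sub_comm]
        calc |F (dseq b) - F (dseq a)| ≤ 2 * Gf (dseq a) :=
              hann (dseq b) (dseq a) (hdpos b) hc (hdle a)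
        _ ≤ 2 * Gf (dseq N) := by linarith [hGN a ha]
    · have := hGseq.const_mul (2:ℝ)
      simpa using this
  obtain ⟨l, hl⟩ := cauchySeq_tendsto_of_complete hcauchy
  have hFl : Tendsto F (𝓝[>] (0:ℝ)) (𝓝 l) := by
    rw [Metric.tendsto_nhdsWithin_nhds]
    intro η hη
    have h1 : ∀ᶠ k in atTop, 2 * Gf (dseq k) < η/2 := by
      have h2 := hGseq.const_mul (2:ℝ)
      simp only [mul_zero] at h2
      exact h2.eventually_lt_const (by linarith)
    have h2 : ∀ᶠ k in atTop, dist (F (dseq k)) l < η/2 := by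
      have := hl.eventually (Metric.ball_mem_nhds l (by linarith : (0:ℝ) < η/2))
      filter_upwards [this] with k hk
      exact mem_ball.mp hk
    obtain ⟨k, hk1, hk2⟩ := (h1.and h2).exists
    refine ⟨dseq k, hdpos k, ?_⟩
    intro δ hδ hdist
    have hδpos : (0:ℝ) < δ := hδ
    have hδle : δ ≤ dseq k := by
      rw [Real.dist_eq, sub_zero] at hdist
      exact (le_abs_self δ).trans hdist.le
    calc dist (F δ) l ≤ dist (F δ) (F (dseq k)) + dist (F (dseq k)) l := dist_triangle _ _ _
    _ < 2 * Gf (dseq k) + η/2 := by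
        apply add_lt_add_of_le_of_lt _ hk2
        rw [Real.dist_eq]
        exact hann δ (dseq k) hδpos hδle (hdle k)
    _ < η/2 + η/2 := by linarith
    _ = η := by ring
  have hkst : kSt K ψ y = l := by
    rw [kSt]
    exact hFl.limUnder_eq
  rw [hkst]
  exact hFl

end Lem38
namespace Lem38
set_option maxHeartbeats 1000000

lemma kSt_le_intK {N : ℕ} {R : ℝ} (hR : 0 < R) {K : Euc N → ℝ} (hK : KernelOK R K)
    {ψ : Euc N → ℝ} (hψ : ContDiff ℝ 2 ψ) {y : Euc N} (hy : gradient ψ y ≠ 0) :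
    kSt K ψ y ≤ ∫ z, K z := by
  refine le_of_tendsto (pv_tendsto hR hK hψ hy) ?_
  filter_upwards [self_mem_nhdsWithin] with δ hδ
  have hδpos : (0:ℝ) < δ := hδ
  have hint := (hK.2.2.2.1 δ hδpos).1
  have hσm := meas_sigma hψ.continuous y
  have hσb : ∀ z : Euc N, |(if ψ y ≤ ψ (y+z) then (1:ℝ) else -1)| ≤ 1 := fun z => by
    split <;> simp
  calc ∫ z in (ball (0:Euc N) δ)ᶜ, K z * (if ψ y ≤ ψ (y + z) then (1:ℝ) else -1)
      ≤ ∫ z in (ball (0:Euc N) δ)ᶜ, K z := by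
        refine setIntegral_mono_on (int_mul_bdd hint hσm hσb) hint
          measurableSet_ball.compl (fun z _ => ?_)
        have h1 := (abs_le.mp (hσb z)).2
        exact mul_le_of_le_one_right (hK.1 z) h1
  _ ≤ ∫ z, K z := setIntegral_le_integral (integrable_K hK)
        (by filter_upwards with z using hK.1 z)

end Lem38
set_option maxHeartbeats 2000000 in
/-- Lemma 3.8: estimate from above for `R^ε` (integral curvature game). -/
theorem estimate_above_Rup_curvature
    {N : ℕ} (hN : 1 ≤ N) (R : ℝ) (hR : 0 < R) (T : ℝ) (hT : 0 < T)
    (K : Euc N → ℝ) (hK : KernelOK R K)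
    (φ : ℝ → Euc N → ℝ)
    (hφ : ContDiffOn ℝ 2 (fun p : ℝ × Euc N => φ p.1 p.2) (Ioc (0:ℝ) T ×ˢ univ))
    (hφb : ∃ M, ∀ t ∈ Ioc (0:ℝ) T, ∀ x, |φ t x| ≤ M)
    (t₀ : ℝ) (x₀ : Euc N) (ht₀ : t₀ ∈ Ioo (0:ℝ) T) :
    ∃ o : ℝ → ℝ → ℝ, (∀ ε r, 0 ≤ o ε r) ∧
      Tendsto (fun p : ℝ × ℝ => o p.1 p.2) (𝓝[Ioi 0 ×ˢ Ioi 0] ((0:ℝ), (0:ℝ))) (𝓝 0) ∧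
      ∃ ε₀ > (0:ℝ), ∃ r₀ > (0:ℝ), ∀ ε ∈ Ioo (0:ℝ) ε₀, ∀ r ∈ Ioo (0:ℝ) r₀,
        ∀ (t : ℝ) (x : Euc N), dist (t, x) (t₀, x₀) < r →
          -- (i)
          (Rg K R ε φ t x - φ t x ≤ ε ^ 2 * (deriv (fun s => φ s x₀) t₀ + o ε r)) ∨
          -- (ii)
          (gradient (φ t₀) x₀ = 0 ∧ ∃ p ∈ Cplus ε x,
            Rg K R ε φ t x - φ t x ≤ TPg K ε p.1 p.2 *
              (deriv (fun s => φ s x₀) t₀ + o ε r)) ∨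
          -- (iii)
          (gradient (φ t₀) x₀ ≠ 0 ∧ 0 ≤ kSt K (φ t₀) x₀ ∧ ∃ p ∈ Cplus ε x,
            gradient p.2 p.1 ≠ 0 ∧ 0 < kSt K p.2 p.1 ∧
            kSt K p.2 p.1 ≤ kSt K (φ t₀) x₀ + o ε r ∧
            TPg K ε p.1 p.2 = min (ε / kSt K p.2 p.1) (ε ^ ((1:ℝ)/2)) ∧
            Rg K R ε φ t x - φ t x ≤ TPg K ε p.1 p.2 *
              (deriv (fun s => φ s x₀) t₀ +
                kSt K (φ t₀) x₀ * ‖gradient (φ t₀) x₀‖ + o ε r)) := by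
  classical
  obtain ⟨M, hM⟩ := hφb
  obtain ⟨ht₀0, ht₀T⟩ := ht₀
  set Φ : ℝ × Euc N → ℝ := fun p => φ p.1 p.2 with hΦdef
  set U : Set (ℝ × Euc N) := Ioo (0:ℝ) T ×ˢ (univ : Set (Euc N)) with hUdef
  have hUopen : IsOpen U := isOpen_Ioo.prod isOpen_univ
  have hUsub : U ⊆ Ioc (0:ℝ) T ×ˢ (univ : Set (Euc N)) :=
    prod_mono Ioo_subset_Ioc_self (subset_refl _)
  have hΦU : ContDiffOn ℝ 2 Φ U := hφ.mono hUsub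
  have hq₀U : ((t₀, x₀) : ℝ × Euc N) ∈ U := ⟨⟨ht₀0, ht₀T⟩, mem_univ _⟩
  have hf1cont : ContinuousOn (fderiv ℝ Φ) U :=
    hΦU.continuousOn_fderiv_of_isOpen hUopen (by norm_num)
  have hdiffat : ∀ q ∈ U, HasFDerivAt Φ (fderiv ℝ Φ q) q := by
    intro q hq
    have h1 : ContDiffAt ℝ 2 Φ q := hΦU.contDiffAt (hUopen.mem_nhds hq)
    exact (h1.differentiableAt (by norm_num)).hasFDerivAt
  set f₀ := fderiv ℝ Φ (t₀, x₀) with hf₀def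
  set β := min t₀ (T - t₀) / 2 with hβdef
  have hβpos : 0 < β := by
    rw [hβdef]
    have h1 : 0 < min t₀ (T - t₀) := lt_min ht₀0 (by linarith)
    linarith
  have hβt₀ : β ≤ t₀ / 2 := by
    rw [hβdef]
    have := min_le_left t₀ (T - t₀)
    linarith
  have hβT : t₀ + β < T := by
    rw [hβdef]
    have := min_le_right t₀ (T - t₀)
    have h2 : 0 < T - t₀ := by linarith
    nlinarith
  set tube : Set (ℝ × Euc N) := Icc (t₀ - β) (t₀ + β) ×ˢ closedBall x₀ (R + 2) with htubedef
  have htubeU : tube ⊆ U := by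
    rintro ⟨s', z⟩ ⟨hs, _⟩
    refine ⟨⟨?_, ?_⟩, mem_univ _⟩
    · have := hs.1; linarith
    · have := hs.2; linarith
  have htube_conv : Convex ℝ tube := (convex_Icc _ _).prod (convex_closedBall _ _)
  have htube_cpt : IsCompact tube := isCompact_Icc.prod (isCompact_closedBall _ _)
  obtain ⟨Λ₀, hΛ₀⟩ := htube_cpt.exists_bound_of_continuousOn (hf1cont.mono htubeU)
  set Λ := max Λ₀ 1 with hΛdef
  have hΛ1 : (1:ℝ) ≤ Λ := le_max_right _ _
  have hΛbd : ∀ q ∈ tube, ‖fderiv ℝ Φ q‖ ≤ Λ := fun q hq => (hΛ₀ q hq).trans (le_max_left _ _)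
  have hLip : ∀ q ∈ tube, ∀ q' ∈ tube, |Φ q - Φ q'| ≤ Λ * ‖q - q'‖ := by
    intro q hq q' hq'
    have h1 := Convex.norm_image_sub_le_of_norm_hasFDerivWithin_le
      (f' := fderiv ℝ Φ) (fun u hu => (hdiffat u (htubeU hu)).hasFDerivWithinAt)
      hΛbd htube_conv hq' hq
    simpa [Real.norm_eq_abs] using h1
  -- time derivative
  have hader : HasDerivAt (fun s => φ s x₀) (f₀ (1, 0)) t₀ := by
    have h1 : HasDerivAt (fun s : ℝ => ((s, x₀) : ℝ × Euc N)) ((1:ℝ), (0:Euc N)) t₀ :=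
      (hasDerivAt_id t₀).prodMk (hasDerivAt_const t₀ x₀)
    exact (hdiffat (t₀, x₀) hq₀U).comp_hasDerivAt t₀ h1
  set a := deriv (fun s => φ s x₀) t₀ with hadef
  have ha : a = f₀ (1, 0) := by rw [hadef, hader.deriv]
  -- gradient
  set G₀ := gradient (φ t₀) x₀ with hG₀def
  set Gn := ‖G₀‖ with hGndef
  have hGn0 : 0 ≤ Gn := norm_nonneg _
  have hgrad_inner : ∀ w : Euc N, (inner ℝ G₀ w : ℝ) = f₀ (0, w) := by
    have h1 : HasFDerivAt (fun z : Euc N => ((t₀, z) : ℝ × Euc N))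
        (((0 : Euc N →L[ℝ] ℝ)).prod (ContinuousLinearMap.id ℝ (Euc N))) x₀ :=
      (hasFDerivAt_const t₀ x₀).prodMk (hasFDerivAt_id x₀)
    have h2 := (hdiffat (t₀, x₀) hq₀U).comp x₀ h1
    intro w
    have h3 : fderiv ℝ (φ t₀) x₀ = (fderiv ℝ Φ (t₀,x₀)).comp
        (((0 : Euc N →L[ℝ] ℝ)).prod (ContinuousLinearMap.id ℝ (Euc N))) := h2.fderiv
    have h4 : (inner ℝ G₀ w : ℝ) = fderiv ℝ (φ t₀) x₀ w := by
      rw [hG₀def, gradient, InnerProductSpace.toDual_symm_apply]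
    rw [h4, h3]
    simp [hf₀def]
  have hf₀split : ∀ (τ : ℝ) (w : Euc N), f₀ (τ, w) = a * τ + (inner ℝ G₀ w : ℝ) := by
    intro τ w
    have h1 : ((τ, w) : ℝ × Euc N) = τ • ((1:ℝ), (0:Euc N)) + ((0:ℝ), w) := by
      simp [Prod.ext_iff]
    rw [h1, map_add, _root_.map_smul, ha, hgrad_inner]
    simp [smul_eq_mul]
    ring
  -- slice regularity
  have hφt₀ : ContDiff ℝ 2 (φ t₀) := by
    rw [← contDiffOn_univ]
    exact hφ.comp ((contDiff_const.prodMk contDiff_id).contDiffOn)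
      (fun z _ => ⟨⟨ht₀0, ht₀T.le⟩, mem_univ _⟩)
  -- moduli : ν
  set ν : ℝ → ℝ := fun ρ =>
    sSup ((fun q => ‖fderiv ℝ Φ q - f₀‖) '' (closedBall ((t₀,x₀) : ℝ × Euc N) ρ ∩ tube))
    with hνdef
  have hνbdd : ∀ ρ : ℝ, BddAbove
      ((fun q => ‖fderiv ℝ Φ q - f₀‖) '' (closedBall ((t₀,x₀) : ℝ × Euc N) ρ ∩ tube)) := by
    intro ρ
    refine ⟨Λ + ‖f₀‖, ?_⟩
    rintro w ⟨q, ⟨_, hq⟩, rfl⟩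
    calc ‖fderiv ℝ Φ q - f₀‖ ≤ ‖fderiv ℝ Φ q‖ + ‖f₀‖ := norm_sub_le _ _
    _ ≤ Λ + ‖f₀‖ := by linarith [hΛbd q hq]
  have hν_le : ∀ ρ : ℝ, ∀ q ∈ closedBall ((t₀,x₀) : ℝ × Euc N) ρ ∩ tube,
      ‖fderiv ℝ Φ q - f₀‖ ≤ ν ρ := fun ρ q hq => le_csSup (hνbdd ρ) (mem_image_of_mem _ hq)
  have hν_nonneg : ∀ ρ, 0 ≤ ν ρ := by
    intro ρ
    by_cases hne : ((fun q => ‖fderiv ℝ Φ q - f₀‖) ''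
        (closedBall ((t₀,x₀) : ℝ × Euc N) ρ ∩ tube)).Nonempty
    · obtain ⟨w, hw⟩ := hne
      obtain ⟨q, hq, rfl⟩ := hw
      exact le_trans (norm_nonneg _) (hν_le ρ q hq)
    · rw [hνdef]
      dsimp only
      rw [not_nonempty_iff_eq_empty.mp hne, Real.sSup_empty]
  have hν_small : ∀ η > (0:ℝ), ∃ ρ > (0:ℝ), ∀ ρ' ≤ ρ, ν ρ' ≤ η := by
    intro η hη
    have hcont : ContinuousAt (fderiv ℝ Φ) (t₀,x₀) :=
      hf1cont.continuousAt (hUopen.mem_nhds hq₀U)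
    obtain ⟨ρ₂, hρ₂pos, hρ₂⟩ := Metric.continuousAt_iff.mp hcont η hη
    refine ⟨ρ₂/2, by positivity, ?_⟩
    intro ρ' hρ'
    apply Real.sSup_le _ hη.le
    rintro w ⟨q, ⟨hq1, _⟩, rfl⟩
    have h1 : dist q ((t₀,x₀) : ℝ × Euc N) < ρ₂ := by
      have := mem_closedBall.mp hq1
      linarith
    have h2 := hρ₂ h1
    rw [dist_eq_norm] at h2
    exact h2.le
  -- moduli : m
  set c₀ := φ t₀ x₀ with hc₀def
  set Aset : ℝ → Set (Euc N) := fun ρ =>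
    {z | c₀ - ρ ≤ φ t₀ (x₀ + z)} ∩ {z | φ t₀ (x₀ + z) < c₀} with hAdef
  have hφt₀c : Continuous (fun z : Euc N => φ t₀ (x₀ + z)) :=
    hφt₀.continuous.comp (continuous_const.add continuous_id)
  have hAmeas : ∀ ρ, MeasurableSet (Aset ρ ∩ ball (0:Euc N) R) := by
    intro ρ
    refine MeasurableSet.inter (MeasurableSet.inter ?_ ?_) measurableSet_ball
    · exact (isClosed_le continuous_const hφt₀c).measurableSet
    · exact (isOpen_lt hφt₀c continuous_const).measurableSet
  have hKR_int : IntegrableOn K (ball (0:Euc N) R) volume := hK.2.2.2.2.1 R hR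
  set mfn : ℝ → ℝ := fun ρ => 2 * ∫ z in Aset ρ ∩ ball (0:Euc N) R, K z with hmdef
  have hm_nonneg : ∀ ρ, 0 ≤ mfn ρ := by
    intro ρ
    have h1 := setIntegral_nonneg (μ := volume) (hAmeas ρ) (fun z _ => hK.1 z)
    rw [hmdef]
    dsimp only
    linarith
  have hm_mono : ∀ ρ ρ' : ℝ, ρ ≤ ρ' → mfn ρ ≤ mfn ρ' := by
    intro ρ ρ' h
    rw [hmdef]
    dsimp only
    have hsub : Aset ρ ∩ ball (0:Euc N) R ⊆ Aset ρ' ∩ ball (0:Euc N) R := by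
      apply inter_subset_inter _ subset_rfl
      rintro z ⟨hz1, hz2⟩
      exact ⟨by simp only [mem_setOf_eq] at hz1 ⊢; linarith, hz2⟩
    have h2 := setIntegral_mono_set (hKR_int.mono_set inter_subset_right)
      (by filter_upwards with z using hK.1 z) (HasSubset.Subset.eventuallyLE hsub)
    linarith
  have hm_small : ∀ η > (0:ℝ), ∃ ρ > (0:ℝ), ∀ ρ' ≤ ρ, mfn ρ' ≤ η := by
    intro η hη
    have hseq : Tendsto (fun k : ℕ =>
        ∫ z : Euc N, ((Aset (1/(k+1)) ∩ ball (0:Euc N) R).indicator K) z)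
        atTop (𝓝 (∫ z : Euc N, (0:ℝ))) := by
      apply tendsto_integral_of_dominated_convergence ((ball (0:Euc N) R).indicator K)
      · intro k
        exact ((integrable_indicator_iff (hAmeas _)).mpr
          (hKR_int.mono_set inter_subset_right)).aestronglyMeasurable
      · exact (integrable_indicator_iff measurableSet_ball).mpr hKR_int
      · intro k
        filter_upwards with z
        by_cases hz : z ∈ Aset (1/(k+1)) ∩ ball (0:Euc N) R
        · rw [Set.indicator_of_mem hz, Set.indicator_of_mem hz.2, Real.norm_eq_abs,
            abs_of_nonneg (hK.1 z)]
        · rw [Set.indicator_of_notMem hz, norm_zero]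
          exact Set.indicator_nonneg (fun w _ => hK.1 w) z
      · filter_upwards with z
        by_cases hz : φ t₀ (x₀ + z) < c₀
        · obtain ⟨k₀, hk₀⟩ := exists_nat_one_div_lt (by linarith : (0:ℝ) < c₀ - φ t₀ (x₀ + z))
          apply tendsto_const_nhds.congr'
          filter_upwards [eventually_ge_atTop k₀] with k hk
          have hnot : z ∉ Aset (1/(k+1)) ∩ ball (0:Euc N) R := by
            rintro ⟨⟨h1, _⟩, _⟩
            simp only [mem_setOf_eq] at h1
            have h2 : (1:ℝ)/(k+1) ≤ 1/(k₀+1) := by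
              have hcast : (k₀:ℝ) ≤ (k:ℝ) := by exact_mod_cast hk
              gcongr
            linarith
          rw [Set.indicator_of_notMem hnot]
        · apply tendsto_const_nhds.congr'
          filter_upwards with k
          have hnot : z ∉ Aset (1/(k+1)) ∩ ball (0:Euc N) R := fun hmem => hz hmem.1.2
          rw [Set.indicator_of_notMem hnot]
    rw [integral_zero] at hseq
    have hseq2 : Tendsto (fun k : ℕ => mfn (1/(k+1))) atTop (𝓝 0) := by
      have h2 := hseq.const_mul (2:ℝ)
      rw [mul_zero] at h2
      apply h2.congr
      intro k
      rw [hmdef]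
      dsimp only
      rw [integral_indicator (hAmeas _)]
    obtain ⟨k, hk⟩ := (hseq2.eventually_lt_const hη).exists
    exact ⟨1/(k+1), by positivity, fun ρ' hρ' => (hm_mono _ _ hρ').trans hk.le⟩
  -- kernel mass
  set κb := ∫ z, K z with hκbdef
  have hκb0 : 0 ≤ κb := Lem38.Kst_int_nonneg hK
  set κ' := κb + 1 with hκ'def
  have hκ'1 : (1:ℝ) ≤ κ' := by linarith
  have hκ'pos : (0:ℝ) < κ' := by linarith
  -- threshold for the negative curvature case
  obtain ⟨ρs, hρspos, hρsprop⟩ : ∃ ρs > (0:ℝ),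
      (gradient (φ t₀) x₀ ≠ 0 ∧ kSt K (φ t₀) x₀ < 0) →
      ∀ ρ' ≤ ρs, mfn ρ' < -kSt K (φ t₀) x₀ := by
    by_cases hneg : gradient (φ t₀) x₀ ≠ 0 ∧ kSt K (φ t₀) x₀ < 0
    · obtain ⟨ρs, hρs, hρs'⟩ := hm_small (-kSt K (φ t₀) x₀ / 2) (by linarith [hneg.2])
      exact ⟨ρs, hρs, fun _ ρ' hρ' => (hρs' ρ' hρ').trans_lt (by linarith [hneg.2])⟩
    · exact ⟨1, one_pos, fun h => absurd h hneg⟩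
  set Cst := 3*Λ + |a| + 1 with hCstdef
  have hCst1 : (1:ℝ) ≤ Cst := by
    have := abs_nonneg a
    rw [hCstdef]; linarith
  have hCstpos : (0:ℝ) < Cst := by linarith
  set Ds := ρs / Cst with hDsdef
  have hDspos : 0 < Ds := div_pos hρspos hCstpos
  -- choose ε₀, r₀
  set ε₀ := min 1 (min (β^2/16) (min (κ'⁻¹^2) (min (Ds/4) (Ds^2/16)))) with hε₀def
  set r₀ := min 1 (min (β/4) (Ds/4)) with hr₀def
  have hε₀pos : 0 < ε₀ := by
    rw [hε₀def]
    have h1 : (0:ℝ) < κ'⁻¹^2 := by positivity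
    refine lt_min one_pos (lt_min (by positivity) (lt_min h1 (lt_min (by positivity) (by positivity))))
  have hr₀pos : 0 < r₀ := lt_min one_pos (lt_min (by positivity) (by positivity))
  refine ⟨fun ε r =>
      Real.sqrt (max ε 0) * (1 + Gn) + (max ε 0) * (1 + κ') +
      (1 + κ') * ν (max r 0 + max ε 0 + Real.sqrt (max ε 0)) +
      (1 + Gn) * mfn (Cst * (max r 0 + max ε 0 + Real.sqrt (max ε 0))), ?_, ?_,
      ε₀, hε₀pos, r₀, hr₀pos, ?_⟩
  · -- nonnegativity of o
    intro ε r
    dsimp only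
    have h1 := hν_nonneg (max r 0 + max ε 0 + Real.sqrt (max ε 0))
    have h2 := hm_nonneg (Cst * (max r 0 + max ε 0 + Real.sqrt (max ε 0)))
    have h3 : (0:ℝ) ≤ Real.sqrt (max ε 0) := Real.sqrt_nonneg _
    have h4 : (0:ℝ) ≤ max ε 0 := le_max_right _ _
    have h5 : (0:ℝ) ≤ 1 + Gn := by linarith
    have h6 : (0:ℝ) ≤ 1 + κ' := by linarith
    have := mul_nonneg h3 h5
    have := mul_nonneg h4 h6
    have := mul_nonneg h6 h1
    have := mul_nonneg h5 h2
    linarith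
  · -- tendsto of o
    have hνt : Tendsto ν (𝓝[>] (0:ℝ)) (𝓝 0) := by
      rw [Metric.tendsto_nhdsWithin_nhds]
      intro η hη
      obtain ⟨ρ, hρ, hb⟩ := hν_small (η/2) (by linarith)
      refine ⟨ρ, hρ, ?_⟩
      intro u _ hdist
      rw [Real.dist_eq, sub_zero] at hdist
      have h1 : u ≤ ρ := (le_abs_self u).trans hdist.le
      have h2 := hb u h1
      rw [Real.dist_eq, sub_zero, abs_of_nonneg (hν_nonneg u)]
      linarith
    have hmt : Tendsto mfn (𝓝[>] (0:ℝ)) (𝓝 0) := by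
      rw [Metric.tendsto_nhdsWithin_nhds]
      intro η hη
      obtain ⟨ρ, hρ, hb⟩ := hm_small (η/2) (by linarith)
      refine ⟨ρ, hρ, ?_⟩
      intro u _ hdist
      rw [Real.dist_eq, sub_zero] at hdist
      have h1 : u ≤ ρ := (le_abs_self u).trans hdist.le
      have h2 := hb u h1
      rw [Real.dist_eq, sub_zero, abs_of_nonneg (hm_nonneg u)]
      linarith
    set sfun : ℝ × ℝ → ℝ := fun p => max p.2 0 + max p.1 0 + Real.sqrt (max p.1 0) with hsfun
    have hscont : Continuous sfun := by
      refine Continuous.add (Continuous.add ?_ ?_) ?_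
      · exact continuous_snd.max continuous_const
      · exact continuous_fst.max continuous_const
      · exact Real.continuous_sqrt.comp (continuous_fst.max continuous_const)
    have hs0 : sfun ((0:ℝ),(0:ℝ)) = 0 := by
      rw [hsfun]; norm_num
    have hst : Tendsto sfun (𝓝[Ioi (0:ℝ) ×ˢ Ioi (0:ℝ)] ((0:ℝ),(0:ℝ))) (𝓝 0) := by
      have h1 := (hscont.tendsto ((0:ℝ),(0:ℝ))).mono_left
        (nhdsWithin_le_nhds (s := Ioi (0:ℝ) ×ˢ Ioi (0:ℝ)))
      rwa [hs0] at h1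
    have hsmem : ∀ᶠ p : ℝ × ℝ in 𝓝[Ioi (0:ℝ) ×ˢ Ioi (0:ℝ)] ((0:ℝ),(0:ℝ)),
        sfun p ∈ Ioi (0:ℝ) := by
      filter_upwards [self_mem_nhdsWithin] with p hp
      have h1 : (0:ℝ) < p.1 := hp.1
      have h2 : (0:ℝ) < p.2 := hp.2
      have h3 : (0:ℝ) < max p.1 0 := lt_max_of_lt_left h1
      have h4 : (0:ℝ) < Real.sqrt (max p.1 0) := Real.sqrt_pos.mpr h3
      have h5 : (0:ℝ) ≤ max p.2 0 := le_max_right _ _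
      rw [hsfun]
      simp only [mem_Ioi]
      linarith
    have hsW : Tendsto sfun (𝓝[Ioi (0:ℝ) ×ˢ Ioi (0:ℝ)] ((0:ℝ),(0:ℝ))) (𝓝[>] (0:ℝ)) :=
      tendsto_nhdsWithin_iff.mpr ⟨hst, hsmem⟩
    have hCsW : Tendsto (fun p => Cst * sfun p)
        (𝓝[Ioi (0:ℝ) ×ˢ Ioi (0:ℝ)] ((0:ℝ),(0:ℝ))) (𝓝[>] (0:ℝ)) := by
      apply tendsto_nhdsWithin_iff.mpr
      constructor
      · have h1 := hst.const_mul Cst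
        rwa [mul_zero] at h1
      · filter_upwards [hsmem] with p hp
        exact mul_pos hCstpos hp
    have ht1 : Tendsto (fun p : ℝ × ℝ => Real.sqrt (max p.1 0) * (1 + Gn))
        (𝓝[Ioi (0:ℝ) ×ˢ Ioi (0:ℝ)] ((0:ℝ),(0:ℝ))) (𝓝 0) := by
      have hc : Continuous (fun p : ℝ × ℝ => Real.sqrt (max p.1 0) * (1 + Gn)) :=
        (Real.continuous_sqrt.comp (continuous_fst.max continuous_const)).mul continuous_const
      have h1 := (hc.tendsto ((0:ℝ),(0:ℝ))).mono_left
        (nhdsWithin_le_nhds (s := Ioi (0:ℝ) ×ˢ Ioi (0:ℝ)))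
      simpa using h1
    have ht2 : Tendsto (fun p : ℝ × ℝ => (max p.1 0) * (1 + κ'))
        (𝓝[Ioi (0:ℝ) ×ˢ Ioi (0:ℝ)] ((0:ℝ),(0:ℝ))) (𝓝 0) := by
      have hc : Continuous (fun p : ℝ × ℝ => (max p.1 0) * (1 + κ')) :=
        (continuous_fst.max continuous_const).mul continuous_const
      have h1 := (hc.tendsto ((0:ℝ),(0:ℝ))).mono_left
        (nhdsWithin_le_nhds (s := Ioi (0:ℝ) ×ˢ Ioi (0:ℝ)))
      simpa using h1
    have ht3 : Tendsto (fun p : ℝ × ℝ => (1 + κ') * ν (sfun p))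
        (𝓝[Ioi (0:ℝ) ×ˢ Ioi (0:ℝ)] ((0:ℝ),(0:ℝ))) (𝓝 0) := by
      have h1 := (hνt.comp hsW).const_mul (1 + κ')
      rwa [mul_zero] at h1
    have ht4 : Tendsto (fun p : ℝ × ℝ => (1 + Gn) * mfn (Cst * sfun p))
        (𝓝[Ioi (0:ℝ) ×ˢ Ioi (0:ℝ)] ((0:ℝ),(0:ℝ))) (𝓝 0) := by
      have h1 := (hmt.comp hCsW).const_mul (1 + Gn)
      rwa [mul_zero] at h1
    have htot := ((ht1.add ht2).add ht3).add ht4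
    simp only [add_zero] at htot
    exact htot
  · -- main estimate
    intro ε hε r hr t x hdist
    obtain ⟨hεpos, hεlt⟩ := hε
    obtain ⟨hrpos, hrlt⟩ := hr
    -- basic bounds from the choice of ε₀, r₀
    have hε₀1 : ε₀ ≤ 1 := min_le_left _ _
    have hε₀β : ε₀ ≤ β^2/16 := le_trans (min_le_right _ _) (min_le_left _ _)
    have hε₀κ : ε₀ ≤ κ'⁻¹^2 :=
      le_trans (min_le_right _ _) (le_trans (min_le_right _ _) (min_le_left _ _))
    have hε₀D1 : ε₀ ≤ Ds/4 := le_trans (min_le_right _ _) (le_trans (min_le_right _ _)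
      (le_trans (min_le_right _ _) (min_le_left _ _)))
    have hε₀D2 : ε₀ ≤ Ds^2/16 := le_trans (min_le_right _ _) (le_trans (min_le_right _ _)
      (le_trans (min_le_right _ _) (min_le_right _ _)))
    have hr₀1 : r₀ ≤ 1 := min_le_left _ _
    have hr₀β : r₀ ≤ β/4 := le_trans (min_le_right _ _) (min_le_left _ _)
    have hr₀D : r₀ ≤ Ds/4 := le_trans (min_le_right _ _) (min_le_right _ _)
    have hε1 : ε < 1 := lt_of_lt_of_le hεlt hε₀1
    have hr1 : r < 1 := lt_of_lt_of_le hrlt hr₀1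
    set sq := Real.sqrt ε with hsqdef
    set sρ := r + ε + sq with hsρdef
    have hsqnn : 0 ≤ sq := Real.sqrt_nonneg _
    have hsqpos : 0 < sq := Real.sqrt_pos.mpr hεpos
    have hsqsq : sq * sq = ε := Real.mul_self_sqrt hεpos.le
    have hsqle : ∀ b : ℝ, 0 ≤ b → ε ≤ b^2 → sq ≤ b := by
      intro b hb hεb
      rw [hsqdef]
      calc Real.sqrt ε ≤ Real.sqrt (b^2) := Real.sqrt_le_sqrt hεb
      _ = b := Real.sqrt_sq hb
    have hsqβ : sq ≤ β/4 := hsqle _ (by positivity) (by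
      have h := hεlt.le.trans hε₀β
      have hid : (β/4)^2 = β^2/16 := by ring
      linarith only [h, hid])
    have hsqκ : sq ≤ κ'⁻¹ := hsqle _ (by positivity) (hεlt.le.trans hε₀κ)
    have hsqD : sq ≤ Ds/4 := hsqle _ (by positivity) (by
      have h := hεlt.le.trans hε₀D2
      have hid : (Ds/4)^2 = Ds^2/16 := by ring
      linarith only [h, hid])
    have hsq1 : sq ≤ 1 := hsqle 1 zero_le_one (by
      have hid : (1:ℝ)^2 = 1 := by ring
      linarith only [hε1.le, hid])
    have hεsq : ε ≤ sq := by
      have h1 := mul_le_mul_of_nonneg_left hsq1 hsqnn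
      have hid : sq * 1 = sq := mul_one sq
      linarith only [h1, hid, hsqsq]
    have hε2ε : ε^2 ≤ ε := by
      have h1 := mul_le_mul_of_nonneg_left hε1.le hεpos.le
      have hid : ε^2 = ε * ε := by ring
      have hid2 : ε * 1 = ε := mul_one ε
      linarith only [h1, hid, hid2]
    have hκ'nn : (0:ℝ) ≤ κ' := by linarith only [hκb0, hκ'def.ge, hκ'1]
    have hrdist : dist t t₀ < r ∧ dist x x₀ < r := by
      rw [Prod.dist_eq] at hdist
      exact ⟨(le_max_left _ _).trans_lt hdist, (le_max_right _ _).trans_lt hdist⟩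
    have htd : |t - t₀| < r := by rw [← Real.dist_eq]; exact hrdist.1
    have hxd : ‖x - x₀‖ < r := by rw [← dist_eq_norm]; exact hrdist.2
    have hrβ : r < β/4 := lt_of_lt_of_le hrlt hr₀β
    have hrD : r < Ds/4 := lt_of_lt_of_le hrlt hr₀D
    have hεD : ε < Ds/4 := lt_of_lt_of_le hεlt hε₀D1
    have htmemIcc : ∀ τ : ℝ, 0 ≤ τ → τ ≤ sq → t + τ ∈ Icc (t₀ - β) (t₀ + β) := by
      intro τ h1 h2
      have h3 := abs_lt.mp htd
      constructor
      · linarith [h3.1]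
      · have h4 : τ ≤ β/4 := h2.trans hsqβ
        linarith [h3.2]
    have htIoc : ∀ τ : ℝ, 0 ≤ τ → τ ≤ sq → t + τ ∈ Ioc 0 T := by
      intro τ h1 h2
      have h3 := htmemIcc τ h1 h2
      constructor
      · have h4 : 0 < t₀ - β := by linarith [hβt₀, ht₀0]
        linarith [h3.1]
      · linarith [h3.2, hβT]
    have htIcc : t ∈ Icc (t₀ - β) (t₀ + β) := by
      have h1 := htmemIcc 0 le_rfl hsqnn
      simpa using h1
    have htube_t : ((t, x) : ℝ × Euc N) ∈ tube := by
      refine ⟨htIcc, ?_⟩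
      rw [mem_closedBall]
      have := hrdist.2
      linarith [hR]
    have htube_q0 : ((t₀, x₀) : ℝ × Euc N) ∈ tube :=
      ⟨⟨by linarith, by linarith⟩, mem_closedBall_self (by linarith)⟩
    -- value of o at (ε, r)
    have homax1 : max ε 0 = ε := max_eq_left hεpos.le
    have homax2 : max r 0 = r := max_eq_left hrpos.le
    have hoval : (fun ε r =>
        Real.sqrt (max ε 0) * (1 + Gn) + (max ε 0) * (1 + κ') +
        (1 + κ') * ν (max r 0 + max ε 0 + Real.sqrt (max ε 0)) +
        (1 + Gn) * mfn (Cst * (max r 0 + max ε 0 + Real.sqrt (max ε 0)))) ε r =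
        sq * (1 + Gn) + ε * (1 + κ') + (1 + κ') * ν sρ + (1 + Gn) * mfn (Cst * sρ) := by
      dsimp only
      rw [homax1, homax2]
    rw [hoval]
    set Osum := sq * (1 + Gn) + ε * (1 + κ') + (1 + κ') * ν sρ + (1 + Gn) * mfn (Cst * sρ)
      with hOdef
    have hOν : (1 + κ') * ν sρ ≤ Osum := by
      have h1 : 0 ≤ sq * (1 + Gn) := mul_nonneg hsqnn (by linarith)
      have h2 : 0 ≤ ε * (1 + κ') := mul_nonneg hεpos.le (by linarith)
      have h3 : 0 ≤ (1 + Gn) * mfn (Cst * sρ) := mul_nonneg (by linarith) (hm_nonneg _)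
      rw [hOdef]; linarith
    have hOm : (1 + Gn) * mfn (Cst * sρ) ≤ Osum := by
      have h1 : 0 ≤ sq * (1 + Gn) := mul_nonneg hsqnn (by linarith)
      have h2 : 0 ≤ ε * (1 + κ') := mul_nonneg hεpos.le (by linarith)
      have h3 : 0 ≤ (1 + κ') * ν sρ := mul_nonneg (by linarith) (hν_nonneg _)
      rw [hOdef]; linarith
    -- key Taylor-type estimate
    have hkey : ∀ τ : ℝ, 0 ≤ τ → τ ≤ sq → ∀ y' : Euc N, dist y' x ≤ ε →
        φ (t + τ) y' - φ t x ≤ a * τ + (inner ℝ G₀ (y' - x) : ℝ) + ν sρ * (τ + ‖y' - x‖) := by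
      intro τ h1 h2 y' hy'
      have hq1mem : ((t, x) : ℝ × Euc N) ∈ closedBall ((t₀,x₀) : ℝ × Euc N) sρ ∩ tube := by
        refine ⟨?_, htube_t⟩
        rw [mem_closedBall, Prod.dist_eq]
        dsimp only
        apply max_le
        · rw [hsρdef]; linarith [hrdist.1.le]
        · rw [hsρdef]; linarith [hrdist.2.le]
      have hq2tube : ((t+τ, y') : ℝ × Euc N) ∈ tube := by
        refine ⟨htmemIcc τ h1 h2, ?_⟩
        rw [mem_closedBall]
        calc dist y' x₀ ≤ dist y' x + dist x x₀ := dist_triangle _ _ _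
        _ ≤ ε + r := by linarith [hrdist.2]
        _ ≤ R + 2 := by linarith [hε1.le, hr1.le, hR]
      have hq2mem : ((t+τ, y') : ℝ × Euc N) ∈ closedBall ((t₀,x₀) : ℝ × Euc N) sρ ∩ tube := by
        refine ⟨?_, hq2tube⟩
        rw [mem_closedBall, Prod.dist_eq]
        dsimp only
        apply max_le
        · rw [Real.dist_eq]
          have h3 := abs_lt.mp htd
          rw [abs_le, hsρdef]
          constructor
          · linarith
          · linarith
        · calc dist y' x₀ ≤ dist y' x + dist x x₀ := dist_triangle _ _ _
          _ ≤ ε + r := by linarith [hrdist.2]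
          _ ≤ sρ := by rw [hsρdef]; linarith
      have hSconv : Convex ℝ (closedBall ((t₀,x₀) : ℝ × Euc N) sρ ∩ tube) :=
        (convex_closedBall _ _).inter htube_conv
      have hmvt := Convex.norm_image_sub_le_of_norm_hasFDerivWithin_le'
        (f' := fderiv ℝ Φ) (φ := f₀)
        (fun u hu => (hdiffat u (htubeU hu.2)).hasFDerivWithinAt)
        (fun u hu => hν_le sρ u hu) hSconv hq1mem hq2mem
      have hdq : ((t+τ, y') : ℝ × Euc N) - ((t,x) : ℝ × Euc N) = ((τ, y' - x) : ℝ × Euc N) := by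
        rw [Prod.mk_sub_mk]
        congr 1
        ring
      rw [hdq, hf₀split τ (y' - x)] at hmvt
      rw [hΦdef] at hmvt
      dsimp only at hmvt
      have hnq : ‖((τ, y' - x) : ℝ × Euc N)‖ ≤ τ + ‖y' - x‖ := by
        rw [Prod.norm_def]
        dsimp only
        apply max_le
        · rw [Real.norm_eq_abs, abs_of_nonneg h1]
          linarith [norm_nonneg (y' - x)]
        · linarith
      have h6 : φ (t+τ) y' - φ t x - (a * τ + (inner ℝ G₀ (y' - x) : ℝ)) ≤
          ν sρ * ‖((τ, y' - x) : ℝ × Euc N)‖ := by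
        rw [Real.norm_eq_abs] at hmvt
        linarith [le_abs_self (φ (t+τ) y' - φ t x - (a * τ + (inner ℝ G₀ (y' - x) : ℝ))), hmvt]
      have h7 := mul_le_mul_of_nonneg_left hnq (hν_nonneg sρ)
      linarith
    -- adversary extraction
    have hxCmem : ((x, fun _ => (0:ℝ)) : Euc N × (Euc N → ℝ)) ∈ Cplus ε x :=
      ⟨mem_ball_self hεpos, contDiff_const, le_refl _⟩
    have hIne : ((fun p : Euc N × (Euc N → ℝ) =>
        sInf ((fun z => φ (t + TPg K ε p.1 p.2) z) '' Pplus K R x p.1 p.2)) ''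
        Cplus ε x).Nonempty := ⟨_, mem_image_of_mem _ hxCmem⟩
    have hlt : Rg K R ε φ t x - ε^3 < sSup ((fun p : Euc N × (Euc N → ℝ) =>
        sInf ((fun z => φ (t + TPg K ε p.1 p.2) z) '' Pplus K R x p.1 p.2)) '' Cplus ε x) := by
      show Rg K R ε φ t x - ε^3 < Rg K R ε φ t x
      have : (0:ℝ) < ε^3 := by positivity
      linarith
    obtain ⟨w, hwmem, hwgt⟩ := exists_lt_of_lt_csSup hIne hlt
    obtain ⟨phat, hphatC, hweq⟩ := hwmem
    obtain ⟨yhat, ψ⟩ := phat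
    have hyball : yhat ∈ ball x ε := hphatC.1
    have hψC : ContDiff ℝ 2 ψ := hphatC.2.1
    dsimp only at hweq
    set v := sInf ((fun z => φ (t + TPg K ε yhat ψ) z) '' Pplus K R x yhat ψ) with hvdef
    have hRgv : Rg K R ε φ t x < v + ε^3 := by
      rw [hweq]
      linarith [hwgt]
    by_cases hbr : gradient ψ yhat ≠ 0 ∧ 0 < kSt K ψ yhat
    swap
    · -- inactive branch : option (i)
      have hTT : TPg K ε yhat ψ = ε^2 := by rw [TPg, if_neg hbr]
      have hPP : Pplus K R x yhat ψ = {x} := by rw [Pplus, if_neg hbr]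
      have hvval : v = φ (t + ε^2) x := by
        rw [hvdef, hPP, hTT, Set.image_singleton, csInf_singleton]
      left
      have hε2 : (0:ℝ) ≤ ε^2 := by positivity
      have hε2sq : ε^2 ≤ sq := hε2ε.trans hεsq
      have h1 := hkey (ε^2) hε2 hε2sq x (by rw [dist_self]; exact hεpos.le)
      simp only [sub_self, inner_zero_right, norm_zero, add_zero] at h1
      have h2 : Rg K R ε φ t x - φ t x ≤ a * ε^2 + ν sρ * ε^2 + ε^3 := by
        rw [hvval] at hRgv
        linarith
      have h3 : a * ε^2 + ν sρ * ε^2 + ε^3 = ε^2 * (a + (ν sρ + ε)) := by ring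
      have h4 : ν sρ + ε ≤ Osum := by
        have e1 : ν sρ ≤ (1+κ') * ν sρ := by
          have h1 := mul_nonneg hκ'nn (hν_nonneg sρ)
          have hid : (1+κ') * ν sρ = ν sρ + κ' * ν sρ := by ring
          linarith only [h1, hid]
        have e2 : ε ≤ ε * (1+κ') := by
          have h1 := mul_nonneg hεpos.le hκ'nn
          have hid : ε * (1+κ') = ε + ε * κ' := by ring
          linarith only [h1, hid]
        have e3 : 0 ≤ sq * (1 + Gn) := mul_nonneg hsqnn (by linarith)
        have e4 : 0 ≤ (1 + Gn) * mfn (Cst * sρ) := mul_nonneg (by linarith) (hm_nonneg _)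
        rw [hOdef]; linarith
      calc Rg K R ε φ t x - φ t x ≤ ε^2 * (a + (ν sρ + ε)) := by linarith
      _ ≤ ε^2 * (a + Osum) := by
          apply mul_le_mul_of_nonneg_left _ hε2
          linarith
    · -- active branch
      have hgradψ : gradient ψ yhat ≠ 0 := hbr.1
      set khat := kSt K ψ yhat with hkhatdef
      have hκpos : 0 < khat := hbr.2
      have hTT : TPg K ε yhat ψ = cutC ε (ε / khat) := by rw [TPg, if_pos hbr]
      have hPP : Pplus K R x yhat ψ = {z | z ∈ ball yhat R ∧ ψ yhat ≤ ψ z} := by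
        rw [Pplus, if_pos hbr]
      have hκκb : khat ≤ κb := Lem38.kSt_le_intK hR hK hψC hgradψ
      have hκκ' : khat < κ' := by rw [hκ'def]; linarith
      have hrpow12 : ε ^ ((1:ℝ)/2) = sq := by rw [hsqdef, Real.sqrt_eq_rpow]
      have hrpow32 : ε ^ ((3:ℝ)/2) = ε * sq := by
        have h1 : (3:ℝ)/2 = 1 + 1/2 := by norm_num
        rw [h1, Real.rpow_add hεpos, Real.rpow_one, hrpow12]
      have hκinv : κ'⁻¹ ≤ khat⁻¹ := by
        apply inv_anti₀ hκpos hκκ'.le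
      have h32le : ε ^ ((3:ℝ)/2) ≤ ε / khat := by
        rw [hrpow32, div_eq_mul_inv]
        exact mul_le_mul_of_nonneg_left (hsqκ.trans hκinv) hεpos.le
      have hTTmin : cutC ε (ε / khat) = min (ε / khat) sq := by
        rw [cutC, max_eq_left h32le, hrpow12]
      set TT := min (ε / khat) sq with hTTdef2
      have hTTsq : TT ≤ sq := min_le_right _ _
      have hTTκ' : ε / κ' ≤ TT := by
        apply le_min
        · rw [div_le_div_iff₀ hκ'pos hκpos]
          exact mul_le_mul_of_nonneg_left hκκ'.le hεpos.le
        · rw [div_le_iff₀ hκ'pos]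
          have hsqκ' : sq ≤ κ' := hsq1.trans hκ'1
          have h1 := mul_le_mul_of_nonneg_left hsqκ' hsqnn
          linarith only [h1, hsqsq]
      have hTTpos : 0 < TT := lt_of_lt_of_le (by positivity) hTTκ'
      have hεκ'TT : ε ≤ κ' * TT := by
        rw [div_le_iff₀ hκ'pos] at hTTκ'
        linarith [hTTκ']
      have hvP : v = sInf ((fun z => φ (t + TT) z) '' {z | z ∈ ball yhat R ∧ ψ yhat ≤ ψ z}) := by
        rw [hvdef, hPP, hTT, hTTmin]
      have hbddB : BddBelow ((fun z => φ (t + TT) z) '' {z | z ∈ ball yhat R ∧ ψ yhat ≤ ψ z}) := by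
        refine ⟨-M, ?_⟩
        rintro u ⟨z, _, rfl⟩
        have h1 := hM (t+TT) (htIoc TT hTTpos.le hTTsq) z
        linarith [(abs_le.mp h1).1]
      have hyhatmem : yhat ∈ {z | z ∈ ball yhat R ∧ ψ yhat ≤ ψ z} := ⟨mem_ball_self hR, le_refl _⟩
      have hvle : v ≤ φ (t + TT) yhat := by
        rw [hvP]
        exact csInf_le hbddB (mem_image_of_mem _ hyhatmem)
      have hydist : dist yhat x ≤ ε := (mem_ball.mp hyball).le
      have hynorm : ‖yhat - x‖ ≤ ε := by rw [← dist_eq_norm]; exact hydist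
      have hkey2' : φ (t+TT) yhat - φ t x ≤ a * TT + (inner ℝ G₀ (yhat - x) : ℝ) + ν sρ * (TT + ε) := by
        have h1 := hkey TT hTTpos.le hTTsq yhat hydist
        have h2 : ν sρ * (TT + ‖yhat - x‖) ≤ ν sρ * (TT + ε) :=
          mul_le_mul_of_nonneg_left (by linarith) (hν_nonneg sρ)
        linarith
      by_cases hG0 : G₀ = 0
      · -- option (ii)
        right; left
        refine ⟨hG0, ((yhat, ψ) : Euc N × (Euc N → ℝ)), hphatC, ?_⟩
        have hIG : (inner ℝ G₀ (yhat - x) : ℝ) = 0 := by rw [hG0, inner_zero_left]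
        have h0 : Rg K R ε φ t x - φ t x ≤ a*TT + ν sρ*TT + ν sρ*ε + ε^3 := by
          have h5 := hkey2'
          rw [hIG] at h5
          have hexp : ν sρ * (TT + ε) = ν sρ * TT + ν sρ * ε := by ring
          linarith only [hRgv, hvle, h5, hexp]
        have e2 : ν sρ * ε ≤ ν sρ * (κ' * TT) :=
          mul_le_mul_of_nonneg_left hεκ'TT (hν_nonneg sρ)
        have e3 : ε^3 ≤ ε^2 * (κ' * TT) := by
          have : ε^3 = ε^2 * ε := by ring
          rw [this]
          exact mul_le_mul_of_nonneg_left hεκ'TT (by positivity)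
        have h1 : Rg K R ε φ t x - φ t x ≤ TT * (a + (ν sρ + κ' * ν sρ + κ' * ε^2)) := by
          have heq : a*TT + ν sρ*TT + ν sρ*(κ'*TT) + ε^2*(κ'*TT) =
              TT * (a + (ν sρ + κ' * ν sρ + κ' * ε^2)) := by ring
          linarith [h0, e2, e3]
        have h2 : ν sρ + κ' * ν sρ + κ' * ε^2 ≤ Osum := by
          have e1 : ν sρ + κ' * ν sρ = (1+κ') * ν sρ := by ring
          have e4 : κ' * ε^2 ≤ ε * (1+κ') := by
            have h1 := mul_le_mul_of_nonneg_left hε2ε hκ'pos.le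
            have hid : ε * (1+κ') = κ' * ε + ε := by ring
            linarith only [h1, hid, hεpos.le]
          have e5 : 0 ≤ sq * (1 + Gn) := mul_nonneg hsqnn (by linarith)
          have e6 : 0 ≤ (1 + Gn) * mfn (Cst * sρ) := mul_nonneg (by linarith) (hm_nonneg _)
          rw [hOdef]; linarith
        dsimp only
        rw [hTT, hTTmin]
        calc Rg K R ε φ t x - φ t x ≤ TT * (a + (ν sρ + κ' * ν sρ + κ' * ε^2)) := h1
        _ ≤ TT * (a + Osum) := by
            apply mul_le_mul_of_nonneg_left _ hTTpos.le
            linarith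
      · -- gradient nonzero at base point
        by_cases hval : v ≤ φ t x + ε^2 * (a + sq)
        · -- option (i)
          left
          have h0 : Rg K R ε φ t x - φ t x < ε^2 * (a + sq) + ε^3 := by linarith [hRgv]
          have h1 : ε^2 * (a + sq) + ε^3 = ε^2 * (a + (sq + ε)) := by ring
          have h2 : sq + ε ≤ Osum := by
            have e1 : sq ≤ sq * (1 + Gn) := by
              have h1 := mul_nonneg hsqnn hGn0
              have hid : sq * (1 + Gn) = sq + sq * Gn := by ring
              linarith only [h1, hid]
            have e2 : ε ≤ ε * (1 + κ') := by
              have h1 := mul_nonneg hεpos.le hκ'nn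
              have hid : ε * (1 + κ') = ε + ε * κ' := by ring
              linarith only [h1, hid]
            have e3 : 0 ≤ (1+κ') * ν sρ := mul_nonneg (by linarith) (hν_nonneg _)
            have e4 : 0 ≤ (1 + Gn) * mfn (Cst * sρ) := mul_nonneg (by linarith) (hm_nonneg _)
            rw [hOdef]; linarith
          calc Rg K R ε φ t x - φ t x ≤ ε^2 * (a + (sq + ε)) := by linarith
          _ ≤ ε^2 * (a + Osum) := by
              apply mul_le_mul_of_nonneg_left _ (by positivity)
              linarith
        · push_neg at hval
          -- curvature comparison
          have hpvψ := Lem38.pv_tendsto hR hK hψC hgradψ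
          have hpv₀ := Lem38.pv_tendsto hR hK hφt₀ hG0
          have hcomp : khat ≤ kSt K (φ t₀) x₀ + mfn (Cst * sρ) := by
            have hev : (fun δ => ∫ z in (ball (0:Euc N) δ)ᶜ,
                K z * (if ψ yhat ≤ ψ (yhat + z) then (1:ℝ) else -1)) ≤ᶠ[𝓝[>] (0:ℝ)]
                (fun δ => (∫ z in (ball (0:Euc N) δ)ᶜ,
                  K z * (if φ t₀ x₀ ≤ φ t₀ (x₀ + z) then (1:ℝ) else -1)) + mfn (Cst * sρ)) := by
              filter_upwards [self_mem_nhdsWithin] with δ hδ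
              have hδpos : (0:ℝ) < δ := hδ
              have hcplint := (hK.2.2.2.1 δ hδpos).1
              have hσ1m := Lem38.meas_sigma hψC.continuous yhat
              have hσ0m := Lem38.meas_sigma hφt₀.continuous x₀
              have hb1 : ∀ z : Euc N, |(if ψ yhat ≤ ψ (yhat+z) then (1:ℝ) else -1)| ≤ 1 := fun z => by
                split <;> simp
              have hb0 : ∀ z : Euc N, |(if φ t₀ x₀ ≤ φ t₀ (x₀+z) then (1:ℝ) else -1)| ≤ 1 :=
                fun z => by split <;> simp
              have hintL := Lem38.int_mul_bdd hcplint hσ1m hb1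
              have hintR1 := Lem38.int_mul_bdd hcplint hσ0m hb0
              have hind_glob : Integrable
                  ((Aset (Cst*sρ) ∩ ball (0:Euc N) R).indicator K) volume :=
                (integrable_indicator_iff (hAmeas _)).mpr (hKR_int.mono_set inter_subset_right)
              have hintR2 : IntegrableOn
                  (fun z => 2 * (Aset (Cst*sρ) ∩ ball (0:Euc N) R).indicator K z)
                  ((ball (0:Euc N) δ)ᶜ) volume := (hind_glob.const_mul 2).integrableOn
              have hpt : ∀ z : Euc N, K z * (if ψ yhat ≤ ψ (yhat+z) then (1:ℝ) else -1) ≤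
                  K z * (if φ t₀ x₀ ≤ φ t₀ (x₀+z) then (1:ℝ) else -1) +
                  2 * (Aset (Cst*sρ) ∩ ball (0:Euc N) R).indicator K z := by
                intro z
                have hind0 : 0 ≤ (Aset (Cst*sρ) ∩ ball (0:Euc N) R).indicator K z :=
                  Set.indicator_nonneg (fun w _ => hK.1 w) z
                rcases eq_or_lt_of_le (hK.1 z) with hKz | hKz
                · rw [← hKz]
                  simp
                  linarith
                · by_cases hσ1 : ψ yhat ≤ ψ (yhat + z)
                  · have hKne : K z ≠ 0 := (ne_of_lt hKz).symm
                    have hzsupp : z ∈ ball (0:Euc N) R :=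
                      hK.2.2.1 (Function.mem_support.mpr hKne)
                    have hzR : ‖z‖ < R := mem_ball_zero_iff.mp hzsupp
                    have hPm : (yhat + z) ∈ {z' | z' ∈ ball yhat R ∧ ψ yhat ≤ ψ z'} := by
                      refine ⟨?_, hσ1⟩
                      rw [mem_ball, dist_eq_norm, add_sub_cancel_left]
                      exact hzR
                    have hφz : v ≤ φ (t + TT) (yhat + z) := by
                      rw [hvP]
                      exact csInf_le hbddB (mem_image_of_mem _ hPm)
                    by_cases hE0 : φ t₀ x₀ ≤ φ t₀ (x₀ + z)
                    · rw [if_pos hσ1, if_pos hE0]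
                      linarith
                    · have hAz : z ∈ Aset (Cst*sρ) ∩ ball (0:Euc N) R := by
                        refine ⟨⟨?_, ?_⟩, hzsupp⟩
                        · show c₀ - Cst * sρ ≤ φ t₀ (x₀ + z)
                          have hq2tube : ((t + TT, yhat + z) : ℝ × Euc N) ∈ tube := by
                            refine ⟨htmemIcc TT hTTpos.le hTTsq, ?_⟩
                            rw [mem_closedBall]
                            have h1 : dist (yhat + z) yhat = ‖z‖ := by
                              rw [dist_eq_norm, add_sub_cancel_left]
                            calc dist (yhat + z) x₀ ≤ dist (yhat + z) yhat + dist yhat x + dist x x₀ :=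
                                dist_triangle4 _ _ _ _
                            _ ≤ R + ε + r := by
                                rw [h1]
                                linarith [hydist, hrdist.2.le, hzR.le]
                            _ ≤ R + 2 := by linarith [hε1.le, hr1.le]
                          have hq3tube : ((t₀, x₀ + z) : ℝ × Euc N) ∈ tube := by
                            refine ⟨⟨by linarith, by linarith⟩, ?_⟩
                            rw [mem_closedBall]
                            have h1 : dist (x₀ + z) x₀ = ‖z‖ := by
                              rw [dist_eq_norm, add_sub_cancel_left]
                            rw [h1]
                            linarith [hzR.le]
                          have hL1 := hLip _ hq2tube _ hq3tube
                          have hdq2 : ((t+TT, yhat+z) : ℝ × Euc N) - ((t₀, x₀+z) : ℝ × Euc N) =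
                              ((t + TT - t₀, yhat - x₀) : ℝ × Euc N) := by
                            rw [Prod.mk_sub_mk]
                            congr 1
                            abel
                          rw [hdq2] at hL1
                          have hnrm : ‖((t + TT - t₀, yhat - x₀) : ℝ × Euc N)‖ ≤
                              (r + sq) + (ε + r) := by
                            rw [Prod.norm_def]
                            dsimp only
                            apply max_le
                            · rw [Real.norm_eq_abs]
                              have h3 := abs_lt.mp htd
                              rw [abs_le]
                              constructor
                              · linarith [hTTpos.le, hsqnn, hεpos.le]
                              · linarith [hTTsq, hεpos.le]
                            · calc ‖yhat - x₀‖ = dist yhat x₀ := (dist_eq_norm _ _).symm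
                              _ ≤ dist yhat x + dist x x₀ := dist_triangle _ _ _
                              _ ≤ ε + r := by linarith [hydist, hrdist.2.le]
                              _ ≤ (r + sq) + (ε + r) := by linarith [hsqnn, hrpos.le]
                          have hL2 := hLip _ htube_t _ htube_q0
                          have hdq3 : ((t,x) : ℝ × Euc N) - ((t₀,x₀) : ℝ × Euc N) =
                              ((t - t₀, x - x₀) : ℝ × Euc N) := by
                            rw [Prod.mk_sub_mk]
                          rw [hdq3] at hL2
                          have hnrm3 : ‖((t - t₀, x - x₀) : ℝ × Euc N)‖ ≤ r := by
                            rw [Prod.norm_def]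
                            dsimp only
                            apply max_le
                            · rw [Real.norm_eq_abs]; exact htd.le
                            · exact hxd.le
                          rw [hΦdef] at hL1 hL2
                          dsimp only at hL1 hL2
                          have hΛnn : (0:ℝ) ≤ Λ := by linarith
                          have hΛ1' := mul_le_mul_of_nonneg_left hnrm hΛnn
                          have hΛ3' := mul_le_mul_of_nonneg_left hnrm3 hΛnn
                          have hA1 := (abs_le.mp hL1).2
                          have hA2 := (abs_le.mp hL2).1
                          have haux : -(ε^2*(|a|+1)) ≤ ε^2*(a + sq) := by
                            have h1 : (0:ℝ) ≤ a + |a| + sq + 1 := by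
                              linarith only [neg_abs_le a, hsqnn]
                            have h2 := mul_nonneg (sq_nonneg ε) h1
                            have hid : ε^2*(a + sq) + ε^2*(|a|+1) =
                                ε^2 * (a + |a| + sq + 1) := by ring
                            linarith only [h2, hid]
                          have hCsρ : Λ * ((r + sq) + (ε + r)) + Λ * r + ε^2*(|a|+1) ≤
                              Cst * sρ := by
                            rw [hCstdef, hsρdef]
                            have t1 : (0:ℝ) ≤ Λ*(2*ε+2*sq) :=
                              mul_nonneg (by linarith only [hΛ1]) (by
                                linarith only [hεpos.le, hsqnn])
                            have t2 : (0:ℝ) ≤ (|a|+1)*(r+(ε-ε^2)+sq) :=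
                              mul_nonneg (by linarith only [abs_nonneg a]) (by
                                linarith only [hrpos.le, hε2ε, hsqnn])
                            have hid : (3*Λ+|a|+1) * (r+ε+sq) =
                                (Λ * ((r + sq) + (ε + r)) + Λ * r + ε^2*(|a|+1)) +
                                (Λ*(2*ε+2*sq) + (|a|+1)*(r+(ε-ε^2)+sq)) := by ring
                            linarith only [t1, t2, hid]
                          have hc0 : c₀ = φ t₀ x₀ := hc₀def
                          linarith only [hA1, hA2, hΛ1', hΛ3', hφz, hval, haux, hCsρ, hc0]
                        · show φ t₀ (x₀ + z) < c₀
                          exact lt_of_not_ge hE0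
                      rw [if_pos hσ1, if_neg hE0, Set.indicator_of_mem hAz]
                      linarith
                  · rw [if_neg hσ1]
                    have h1 : K z * (-1) ≤ K z *
                        (if φ t₀ x₀ ≤ φ t₀ (x₀+z) then (1:ℝ) else -1) := by
                      split
                      · have h2 : K z * (-1) = -(K z * 1) := by ring
                        linarith only [hKz.le, h2]
                      · exact le_refl _
                    linarith
              calc ∫ z in (ball (0:Euc N) δ)ᶜ, K z * (if ψ yhat ≤ ψ (yhat+z) then (1:ℝ) else -1)
                  ≤ ∫ z in (ball (0:Euc N) δ)ᶜ,
                    (K z * (if φ t₀ x₀ ≤ φ t₀ (x₀+z) then (1:ℝ) else -1) +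
                      2 * (Aset (Cst*sρ) ∩ ball (0:Euc N) R).indicator K z) :=
                    setIntegral_mono_on hintL (hintR1.add hintR2)
                      measurableSet_ball.compl (fun z _ => hpt z)
              _ = (∫ z in (ball (0:Euc N) δ)ᶜ,
                    K z * (if φ t₀ x₀ ≤ φ t₀ (x₀+z) then (1:ℝ) else -1)) +
                    ∫ z in (ball (0:Euc N) δ)ᶜ,
                      2 * (Aset (Cst*sρ) ∩ ball (0:Euc N) R).indicator K z :=
                    integral_add hintR1 hintR2
              _ ≤ (∫ z in (ball (0:Euc N) δ)ᶜ,
                    K z * (if φ t₀ x₀ ≤ φ t₀ (x₀+z) then (1:ℝ) else -1)) + mfn (Cst * sρ) := by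
                  have h3 : ∫ z in (ball (0:Euc N) δ)ᶜ,
                      2 * (Aset (Cst*sρ) ∩ ball (0:Euc N) R).indicator K z ≤
                      ∫ z : Euc N, 2 * (Aset (Cst*sρ) ∩ ball (0:Euc N) R).indicator K z := by
                    apply setIntegral_le_integral (hind_glob.const_mul 2)
                    filter_upwards with z
                    exact mul_nonneg (by norm_num)
                      (Set.indicator_nonneg (fun w _ => hK.1 w) z)
                  have h5 : (∫ z : Euc N, 2 * (Aset (Cst*sρ) ∩ ball (0:Euc N) R).indicator K z)
                      = mfn (Cst * sρ) := by
                    rw [integral_const_mul, integral_indicator (hAmeas _), hmdef]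
                  linarith only [h3, h5]
            exact le_of_tendsto_of_tendsto hpvψ (hpv₀.add_const _) hev
          by_cases hκ₀sgn : 0 ≤ kSt K (φ t₀) x₀
          · -- option (iii)
            right; right
            refine ⟨hG0, hκ₀sgn, ((yhat, ψ) : Euc N × (Euc N → ℝ)), hphatC, hgradψ, hbr.2, ?_, ?_, ?_⟩
            · refine hcomp.trans ?_
              have h1 : mfn (Cst * sρ) ≤ Osum := by
                have e1 : mfn (Cst * sρ) ≤ (1 + Gn) * mfn (Cst * sρ) := by
                  have h1 := mul_nonneg hGn0 (hm_nonneg (Cst * sρ))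
                  have hid : (1 + Gn) * mfn (Cst * sρ) =
                      mfn (Cst * sρ) + Gn * mfn (Cst * sρ) := by ring
                  linarith only [h1, hid]
                linarith [hOm]
              linarith
            · dsimp only
              rw [hTT]
              rw [cutC, max_eq_left h32le]
            · dsimp only
              rw [hTT, hTTmin]
              have hinn : (inner ℝ G₀ (yhat - x) : ℝ) ≤ Gn * ε := by
                calc (inner ℝ G₀ (yhat - x) : ℝ) ≤ ‖G₀‖ * ‖yhat - x‖ := real_inner_le_norm _ _
                _ ≤ Gn * ε := by
                    rw [hGndef]
                    exact mul_le_mul_of_nonneg_left hynorm (norm_nonneg _)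
              set κ₀v := kSt K (φ t₀) x₀ with hκ₀vdef
              have hGnε : Gn * ε ≤ TT * (κ₀v * Gn) + TT * (Gn * mfn (Cst*sρ) + Gn * sq) := by
                rcases min_cases (ε / khat) sq with ⟨hmin, hle⟩ | ⟨hmin, hlt2⟩
                · have hTTeq : TT = ε / khat := by rw [hTTdef2, hmin]
                  have hεeq : ε = TT * khat := by
                    rw [hTTeq]
                    field_simp
                  have h1 : Gn * ε = TT * (khat * Gn) := by rw [hεeq]; ring
                  have h2 : TT * (khat * Gn) ≤ TT * ((κ₀v + mfn (Cst*sρ)) * Gn) := by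
                    apply mul_le_mul_of_nonneg_left _ hTTpos.le
                    exact mul_le_mul_of_nonneg_right hcomp hGn0
                  have h3 : TT * ((κ₀v + mfn (Cst*sρ)) * Gn) =
                      TT * (κ₀v * Gn) + TT * (Gn * mfn (Cst*sρ)) := by ring
                  have h4 : 0 ≤ TT * (Gn * sq) :=
                    mul_nonneg hTTpos.le (mul_nonneg hGn0 hsqnn)
                  have hexp : TT * (Gn * mfn (Cst*sρ) + Gn * sq) =
                      TT * (Gn * mfn (Cst*sρ)) + TT * (Gn * sq) := by ring
                  linarith only [h1, h2, h3, h4, hexp]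
                · have hTTeq : TT = sq := by rw [hTTdef2, hmin]
                  have h1 : Gn * ε = TT * (Gn * sq) := by
                    rw [hTTeq, ← hsqsq]; ring
                  have h2 : 0 ≤ TT * (κ₀v * Gn) :=
                    mul_nonneg hTTpos.le (mul_nonneg hκ₀sgn hGn0)
                  have h3 : 0 ≤ TT * (Gn * mfn (Cst*sρ)) :=
                    mul_nonneg hTTpos.le (mul_nonneg hGn0 (hm_nonneg _))
                  have hexp : TT * (Gn * mfn (Cst*sρ) + Gn * sq) =
                      TT * (Gn * mfn (Cst*sρ)) + TT * (Gn * sq) := by ring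
                  linarith only [h1, h2, h3, hexp]
              have h0 : Rg K R ε φ t x - φ t x ≤
                  a*TT + Gn * ε + ν sρ*TT + ν sρ*ε + ε^3 := by
                have h5 := hkey2'
                have hexp : ν sρ * (TT + ε) = ν sρ * TT + ν sρ * ε := by ring
                linarith only [hRgv, hvle, hinn, h5, hexp]
              have e2 : ν sρ * ε ≤ ν sρ * (κ' * TT) :=
                mul_le_mul_of_nonneg_left hεκ'TT (hν_nonneg sρ)
              have e3 : ε^3 ≤ ε^2 * (κ' * TT) := by
                have h6 : ε^3 = ε^2 * ε := by ring
                rw [h6]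
                exact mul_le_mul_of_nonneg_left hεκ'TT (by positivity)
              have h1 : Rg K R ε φ t x - φ t x ≤ TT * (a + κ₀v * Gn +
                  (Gn * mfn (Cst*sρ) + Gn * sq + ν sρ + κ' * ν sρ + κ' * ε^2)) := by
                have heq : a*TT + (TT * (κ₀v * Gn) + TT * (Gn * mfn (Cst*sρ) + Gn * sq)) +
                    ν sρ*TT + ν sρ*(κ'*TT) + ε^2*(κ'*TT) =
                    TT * (a + κ₀v * Gn +
                      (Gn * mfn (Cst*sρ) + Gn * sq + ν sρ + κ' * ν sρ + κ' * ε^2)) := by ring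
                linarith [h0, hGnε, e2, e3]
              have h2 : Gn * mfn (Cst*sρ) + Gn * sq + ν sρ + κ' * ν sρ + κ' * ε^2 ≤ Osum := by
                have e4 : Gn * mfn (Cst*sρ) ≤ (1 + Gn) * mfn (Cst*sρ) := by
                  have h1 := hm_nonneg (Cst*sρ)
                  have hid : (1 + Gn) * mfn (Cst*sρ) =
                      mfn (Cst*sρ) + Gn * mfn (Cst*sρ) := by ring
                  linarith only [h1, hid]
                have e5 : Gn * sq ≤ sq * (1 + Gn) := by
                  have hid : sq * (1 + Gn) = sq + Gn * sq := by ring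
                  linarith only [hsqnn, hid]
                have e6 : ν sρ + κ' * ν sρ = (1+κ') * ν sρ := by ring
                have e7 : κ' * ε^2 ≤ ε * (1+κ') := by
                  have h1 := mul_le_mul_of_nonneg_left hε2ε hκ'pos.le
                  have hid : ε * (1+κ') = κ' * ε + ε := by ring
                  linarith only [h1, hid, hεpos.le]
                rw [hOdef]
                linarith
              calc Rg K R ε φ t x - φ t x ≤ TT * (a + κ₀v * Gn +
                  (Gn * mfn (Cst*sρ) + Gn * sq + ν sρ + κ' * ν sρ + κ' * ε^2)) := h1
              _ ≤ TT * (a + κ₀v * Gn + Osum) := by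
                  apply mul_le_mul_of_nonneg_left _ hTTpos.le
                  linarith
          · -- κ₀ < 0 : impossible
            exfalso
            push_neg at hκ₀sgn
            have hCs : Cst * sρ ≤ ρs := by
              have h1 : sρ ≤ Ds := by
                rw [hsρdef]
                linarith [hrD.le, hεD.le, hsqD]
              calc Cst * sρ ≤ Cst * Ds := mul_le_mul_of_nonneg_left h1 hCstpos.le
              _ = ρs := by
                  rw [hDsdef]
                  field_simp
            have h2 := hρsprop ⟨hG0, hκ₀sgn⟩ (Cst * sρ) hCs
            linarith [hcomp, hκpos]
end
end

section
/- Lemma 3.11 (key claim in the proof of the estimate from above for R^ε). Let K satisfy the stated kernel conditions, let φ : (0,T]×ℝ^N → ℝ be bounded and C², and let (t₀,x₀) ∈ (0,T)×ℝ^N. There exists o : (0,1)×(0,1) → [0,∞) with o(ε,r) → 0 as (ε,r) → (0,0) such that for all sufficiently small ε, r > 0, all (t,x) in the ball B_r(t₀,x₀), and every (y,ψ) ∈ C^+(x) with Dψ(y) ≠ 0, κ*[y,ψ] > 0 and inf_{z ∈ P^+(x,y,ψ)} φ(t + T_P(y,ψ), z) > φ(t + ε², x) − ε³, the following hold with t⁺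 := t + T_P(y,ψ): inf_{z ∈ P^+(x,y,ψ)} φ(t⁺,z) − φ(t⁺,y) ≤ T_P(y,ψ)·(κ⁺·|D_xφ(t₀,x₀)| + o(ε,r)) − ε|D_xφ(t⁺,y)|, where κ⁺·|D_xφ(t₀,x₀)| denotes max(κ*[x₀,φ(t₀,·)],0)·|D_xφ(t₀,x₀)| if D_xφ(t₀,x₀) ≠ 0 and 0 if D_xφ(t₀,x₀) = 0; moreover, if D_xφ(t₀,x₀) ≠ 0, then κ*[y,ψ] ≤ κ*[x₀,φ(t₀,·)] + o(ε,r) and T_P(y,ψ) = min(ε/κ*[y,ψ], ε^{1/2}). -/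
open MeasureTheory Metric Set Filter Topology RealInnerProductSpace

set_option maxHeartbeats 1000000

noncomputable section

attribute [local instance] Classical.propDecidable

/-! ### Auxiliary lemmas -/

/-- Monotone nonneg function with sequential limit 0 tends to 0 from the right. -/
lemma mono_tendsto_zero {f : ℝ → ℝ} (hm : Monotone f) (h0 : ∀ s, 0 ≤ f s)
    (hs : Tendsto (fun n : ℕ => f (1 / (n + 1))) atTop (𝓝 0)) :
    Tendsto f (𝓝[>] (0:ℝ)) (𝓝 0) := by
  rw [Metric.tendsto_nhds]
  intro η hη
  have := (Metric.tendsto_nhds.1 hs) η hη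
  obtain ⟨n, hn⟩ := this.exists
  have hpos : (0:ℝ) < 1 / (n + 1) := by positivity
  filter_upwards [Ioo_mem_nhdsGT hpos] with s hsm
  rw [Real.dist_eq, sub_zero, abs_of_nonneg (h0 s)]
  rw [Real.dist_eq, sub_zero, abs_of_nonneg (h0 _)] at hn
  exact lt_of_le_of_lt (by simpa using hm hsm.2.le) (by simpa using hn)

/-- Set integrals over a shrinking monotone family of sets tend to zero. -/
lemma tendsto_setIntegral_shrink {N : ℕ} {K : Euc N → ℝ}
    (hKi : Integrable K (volume : Measure (Euc N)))
    (hKnn : ∀ z, 0 ≤ K z) (A : ℝ → Set (Euc N))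
    (hmono : ∀ ⦃s t : ℝ⦄, s ≤ t → A s ⊆ A t)
    (hmeas : ∀ s, MeasurableSet (A s))
    (hempty : ∀ᵐ z : Euc N, ∃ n : ℕ, z ∉ A (1 / (n + 1))) :
    Tendsto (fun s => ∫ z in A s, K z) (𝓝[>] (0:ℝ)) (𝓝 0) := by
  apply mono_tendsto_zero
  · intro s t hst
    exact setIntegral_mono_set (hKi.integrableOn)
      (Filter.Eventually.of_forall hKnn) (HasSubset.Subset.eventuallyLE (hmono hst))
  · intro s
    exact setIntegral_nonneg (hmeas s) (fun z _ => hKnn z)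
  · have : ∀ n : ℕ, ∫ z in A (1/(n+1)), K z = ∫ z, (A (1/(n+1))).indicator K z := by
      intro n; rw [integral_indicator (hmeas _)]
    simp_rw [this]
    rw [show (0:ℝ) = ∫ (_ : Euc N), (0:ℝ) from by simp]
    apply tendsto_integral_of_dominated_convergence K
    · intro n
      exact (hKi.aestronglyMeasurable.indicator (hmeas _))
    · exact hKi
    · intro n
      filter_upwards with z
      by_cases hz : z ∈ A (1/(n+1))
      · rw [Set.indicator_of_mem hz]; rw [Real.norm_eq_abs, abs_of_nonneg (hKnn z)]
      · rw [Set.indicator_of_notMem hz]; simpa using hKnn z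
    · filter_upwards [hempty] with z hz
      obtain ⟨n₀, hn₀⟩ := hz
      apply tendsto_const_nhds.congr'
      filter_upwards [eventually_ge_atTop n₀] with n hn
      have : z ∉ A (1/(n+1)) := by
        intro hzz
        exact hn₀ (hmono (by
          apply one_div_le_one_div_of_le
          · positivity
          · exact_mod_cast Nat.succ_le_succ hn) hzz)
      rw [Set.indicator_of_notMem this]

lemma Ksigma_integrable {N : ℕ} {K : Euc N → ℝ}
    (hKi : Integrable K (volume : Measure (Euc N))) {S : Set (Euc N)}
    (hS : MeasurableSet S) :
    Integrable (fun z => K z * (if z ∈ S then (1:ℝ) else -1)) volume := by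
  have : Integrable (fun z => (if z ∈ S then (1:ℝ) else -1) * K z) volume := by
    apply hKi.bdd_mul (c := 1)
    · apply Measurable.aestronglyMeasurable
      exact Measurable.ite hS measurable_const measurable_const
    · exact Filter.Eventually.of_forall (fun z => by by_cases h : z ∈ S <;> simp [h])
  simpa [mul_comm] using this

/-- For an integrable kernel, `kSt` is given by an honest integral. -/
lemma kSt_eq {N : ℕ} {K : Euc N → ℝ} (hN : 1 ≤ N)
    (hKi : Integrable K (volume : Measure (Euc N))) (hKnn : ∀ z, 0 ≤ K z)
    {U : Euc N → ℝ} (hU : Continuous U) (x : Euc N) :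
    kSt K U x = ∫ z, K z * (if U x ≤ U (x + z) then (1:ℝ) else -1) := by
  haveI : Nonempty (Fin N) := ⟨⟨0, hN⟩⟩
  haveI : Inhabited (Fin N) := ⟨⟨0, hN⟩⟩
  haveI : Nontrivial (Euc N) := inferInstance
  have hSmeas : MeasurableSet {z : Euc N | U x ≤ U (x + z)} :=
    measurableSet_le measurable_const ((hU.comp (by continuity)).measurable)
  have hint : Integrable (fun z => K z * (if U x ≤ U (x + z) then (1:ℝ) else -1)) volume := by
    have := Ksigma_integrable hKi (S := {z : Euc N | U x ≤ U (x + z)}) hSmeas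
    simpa using this
  apply Filter.Tendsto.limUnder_eq
  have hball : Tendsto (fun δ : ℝ => ∫ z in ball (0:Euc N) δ, K z) (𝓝[>] (0:ℝ)) (𝓝 0) := by
    apply tendsto_setIntegral_shrink hKi hKnn
    · intro s t hst; exact ball_subset_ball hst
    · intro s; exact measurableSet_ball
    · filter_upwards [ae_iff.2 (by simp [measure_singleton] :
        (volume : Measure (Euc N)) {z : Euc N | ¬ z ≠ 0} = 0)] with z hz
      obtain ⟨n, hn⟩ := exists_nat_gt (1 / ‖z‖)
      refine ⟨n, fun hm => ?_⟩
      rw [mem_ball, dist_zero_right] at hm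
      have hz0 : 0 < ‖z‖ := norm_pos_iff.2 hz
      have h1 : 1 / ‖z‖ < n + 1 := hn.trans (by linarith)
      have := (div_lt_iff₀ hz0).1 h1
      have h2 : 1 / ((n:ℝ) + 1) < ‖z‖ := by
        rw [div_lt_iff₀ (by positivity)]
        nlinarith
      linarith
  have hsmall : Tendsto (fun δ : ℝ => ∫ z in ball (0:Euc N) δ,
      K z * (if U x ≤ U (x + z) then (1:ℝ) else -1)) (𝓝[>] (0:ℝ)) (𝓝 0) := by
    apply squeeze_zero_norm _ hball
    intro δ
    calc ‖∫ z in ball (0:Euc N) δ, K z * (if U x ≤ U (x + z) then (1:ℝ) else -1)‖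
        ≤ ∫ z in ball (0:Euc N) δ, ‖K z * (if U x ≤ U (x + z) then (1:ℝ) else -1)‖ :=
          norm_integral_le_integral_norm _
      _ = ∫ z in ball (0:Euc N) δ, K z := by
          apply integral_congr_ae
          filter_upwards with z
          by_cases h : U x ≤ U (x + z) <;>
            simp [h, abs_of_nonneg (hKnn z), Real.norm_eq_abs, abs_mul]
  have hcomp : ∀ δ : ℝ, ∫ z in (ball (0:Euc N) δ)ᶜ, K z * (if U x ≤ U (x + z) then (1:ℝ) else -1)
      = (∫ z, K z * (if U x ≤ U (x + z) then (1:ℝ) else -1))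
        - ∫ z in ball (0:Euc N) δ, K z * (if U x ≤ U (x + z) then (1:ℝ) else -1) := by
    intro δ
    rw [← integral_add_compl (measurableSet_ball (x := (0:Euc N)) (ε := δ)) hint]
    ring
  simp_rw [hcomp]
  simpa using tendsto_const_nhds.sub hsmall

/-- The slice embedding derivative. -/
def sliceL (N : ℕ) : Euc N →L[ℝ] ℝ × Euc N :=
  (0 : Euc N →L[ℝ] ℝ).prod (ContinuousLinearMap.id ℝ (Euc N))

lemma sliceL_norm_le {N : ℕ} : ‖sliceL N‖ ≤ 1 := by
  apply ContinuousLinearMap.opNorm_le_bound _ zero_le_one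
  intro v
  rw [one_mul]
  show ‖((0:ℝ), v)‖ ≤ ‖v‖
  rw [Prod.norm_def]
  simp

lemma fderiv_slice {N : ℕ} {F : ℝ × Euc N → ℝ} {t : ℝ} {y : Euc N}
    (hF : DifferentiableAt ℝ F (t, y)) :
    fderiv ℝ (fun x => F (t, x)) y = (fderiv ℝ F (t, y)).comp (sliceL N) := by
  have h2 : HasFDerivAt (fun x : Euc N => ((t, x) : ℝ × Euc N)) (sliceL N) y :=
    (hasFDerivAt_const t y).prodMk (hasFDerivAt_id y)
  exact (hF.hasFDerivAt.comp y h2).fderiv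

/-- Lemma 3.11: key claim in the proof of the estimate from above for `R^ε`. -/
theorem key_claim_curvature
    {N : ℕ} (hN : 1 ≤ N) (R : ℝ) (hR : 0 < R) (T : ℝ) (hT : 0 < T)
    (K : Euc N → ℝ) (hK : KernelOK R K)
    (φ : ℝ → Euc N → ℝ)
    (hφ : ContDiffOn ℝ 2 (fun p : ℝ × Euc N => φ p.1 p.2) (Ioc (0:ℝ) T ×ˢ univ))
    (hφb : ∃ M, ∀ t ∈ Ioc (0:ℝ) T, ∀ x, |φ t x| ≤ M)
    (t₀ : ℝ) (x₀ : Euc N) (ht₀ : t₀ ∈ Ioo (0:ℝ) T) :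
    ∃ o : ℝ → ℝ → ℝ, (∀ ε r, 0 ≤ o ε r) ∧
      Tendsto (fun p : ℝ × ℝ => o p.1 p.2) (𝓝[Ioi 0 ×ˢ Ioi 0] ((0:ℝ), (0:ℝ))) (𝓝 0) ∧
      ∃ ε₀ > (0:ℝ), ∃ r₀ > (0:ℝ), ∀ ε ∈ Ioo (0:ℝ) ε₀, ∀ r ∈ Ioo (0:ℝ) r₀,
        ∀ (t : ℝ) (x : Euc N), dist (t, x) (t₀, x₀) < r →
          ∀ (y : Euc N) (ψ : Euc N → ℝ), (y, ψ) ∈ Cplus ε x →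
            gradient ψ y ≠ 0 → 0 < kSt K ψ y →
            sInf ((fun z => φ (t + TPg K ε y ψ) z) '' Pplus K R x y ψ) >
              φ (t + ε ^ 2) x - ε ^ 3 →
            (sInf ((fun z => φ (t + TPg K ε y ψ) z) '' Pplus K R x y ψ) -
                φ (t + TPg K ε y ψ) y ≤
              TPg K ε y ψ *
                ((if gradient (φ t₀) x₀ ≠ 0 then
                    max (kSt K (φ t₀) x₀) 0 * ‖gradient (φ t₀) x₀‖ else 0) + o ε r) -
              ε * ‖gradient (φ (t + TPg K ε y ψ)) y‖) ∧
            (gradient (φ t₀) x₀ ≠ 0 →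
              kSt K ψ y ≤ kSt K (φ t₀) x₀ + o ε r ∧
              TPg K ε y ψ = min (ε / kSt K ψ y) (ε ^ ((1:ℝ)/2))) := by
  classical
  obtain ⟨hKnn, hKeven, hKsupp, hKW, hKball, hKo, hKparab⟩ := hK
  obtain ⟨M, hM⟩ := hφb
  have hKi : Integrable K (volume : Measure (Euc N)) := by
    have h1 := (hKW 1 one_pos).1
    have h2 := hKball 1 one_pos
    have h3 := h2.union h1
    rwa [Set.union_compl_self, integrableOn_univ] at h3
  set F : ℝ × Euc N → ℝ := fun p => φ p.1 p.2 with hFdef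
  set U : Set (ℝ × Euc N) := Ioo (0:ℝ) T ×ˢ (univ : Set (Euc N)) with hUdef
  have hUopen : IsOpen U := isOpen_Ioo.prod isOpen_univ
  have hφU : ContDiffOn ℝ 2 F U := hφ.mono (Set.prod_mono Ioo_subset_Ioc_self subset_rfl)
  have hdiffU : ∀ p ∈ U, DifferentiableAt ℝ F p := fun p hp =>
    (hφU.contDiffAt (hUopen.mem_nhds hp)).differentiableAt two_ne_zero
  set D : Set (ℝ × Euc N) := Icc (t₀/2) ((t₀+T)/2) ×ˢ closedBall x₀ (R+2) with hDdef
  have hDU : D ⊆ U := by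
    rintro ⟨s, z⟩ ⟨hs, hz⟩
    exact ⟨⟨lt_of_lt_of_le (by linarith [ht₀.1]) hs.1,
      lt_of_le_of_lt hs.2 (by linarith [ht₀.2])⟩, mem_univ _⟩
  have hDconv : Convex ℝ D := (convex_Icc _ _).prod (convex_closedBall _ _)
  have hDcomp : IsCompact D := isCompact_Icc.prod (isCompact_closedBall _ _)
  obtain ⟨C₁, hC₁⟩ := hDcomp.exists_bound_of_continuousOn
    ((hφU.continuousOn_fderiv_of_isOpen hUopen one_le_two).mono hDU)
  set L₁ : ℝ := max C₁ 0 with hL₁def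
  have hL₁nn : 0 ≤ L₁ := le_max_right _ _
  have hC₁' : ∀ w ∈ D, ‖fderiv ℝ F w‖ ≤ L₁ := by
    intro w hw; rw [hL₁def]; exact le_trans (hC₁ w hw) (le_max_left _ _)
  have hLip1 : ∀ p ∈ D, ∀ q ∈ D, |F p - F q| ≤ L₁ * ‖p - q‖ := by
    intro p hp q hq
    have := Convex.norm_image_sub_le_of_norm_fderiv_le
      (fun w hw => hdiffU w (hDU hw)) hC₁' hDconv hq hp
    simpa [Real.norm_eq_abs] using this
  have hG1 : ContDiffOn ℝ 1 (fderiv ℝ F) U := hφU.fderiv_of_isOpen hUopen (by norm_num)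
  obtain ⟨C₂, hC₂⟩ := hDcomp.exists_bound_of_continuousOn
    ((hG1.continuousOn_fderiv_of_isOpen hUopen le_rfl).mono hDU)
  set L₂ : ℝ := max C₂ 0 with hL₂def
  have hL₂nn : 0 ≤ L₂ := le_max_right _ _
  have hC₂' : ∀ w ∈ D, ‖fderiv ℝ (fderiv ℝ F) w‖ ≤ L₂ := by
    intro w hw; rw [hL₂def]; exact le_trans (hC₂ w hw) (le_max_left _ _)
  have hLip2 : ∀ p ∈ D, ∀ q ∈ D, ‖fderiv ℝ F p - fderiv ℝ F q‖ ≤ L₂ * ‖p - q‖ := by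
    intro p hp q hq
    exact Convex.norm_image_sub_le_of_norm_fderiv_le
      (fun w hw => ((hG1.contDiffAt (hUopen.mem_nhds (hDU hw))).differentiableAt one_ne_zero))
      hC₂' hDconv hq hp
  have hslice : ∀ s ∈ Ioo (0:ℝ) T, Continuous (φ s) := by
    intro s hs
    have h1 : ContinuousOn (fun x : Euc N => F (s, x)) univ :=
      hφU.continuousOn.comp (Continuous.continuousOn (continuous_const.prodMk continuous_id))
        (fun x _ => ⟨hs, mem_univ _⟩)
    exact continuousOn_univ.mp h1
  have hφt₀cont : Continuous (φ t₀) := hslice t₀ ht₀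
  set Ktot : ℝ := ∫ z, K z with hKtotdef
  have hKtot0 : 0 ≤ Ktot := integral_nonneg hKnn
  set g₀ : Euc N := gradient (φ t₀) x₀ with hg₀def
  set κ₀ : ℝ := kSt K (φ t₀) x₀ with hκ₀def
  set ℓ₀ : ℝ := φ t₀ x₀ with hℓ₀def
  set AA : ℝ → Set (Euc N) :=
    fun s => {z | ℓ₀ - s ≤ φ t₀ (x₀ + z) ∧ φ t₀ (x₀ + z) < ℓ₀} with hAAdef
  have hAAmeas : ∀ s, MeasurableSet (AA s) := by
    intro s
    have hmeasφ : Measurable (fun z : Euc N => φ t₀ (x₀ + z)) :=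
      (hφt₀cont.comp (continuous_const.add continuous_id)).measurable
    exact (measurableSet_le measurable_const hmeasφ).inter
      (measurableSet_lt hmeasφ measurable_const)
  have hAAmono : ∀ ⦃s u : ℝ⦄, s ≤ u → AA s ⊆ AA u := by
    intro s u hsu z hz
    exact ⟨le_trans (by linarith [hz.1]) le_rfl, hz.2⟩
  set hh : ℝ → ℝ := fun s => 2 * ∫ z in AA s, K z with hhdef
  have hhnn : ∀ s, 0 ≤ hh s := by
    intro s
    have h1 : (0:ℝ) ≤ ∫ z in AA s, K z :=
      setIntegral_nonneg (hAAmeas s) (fun z _ => hKnn z)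
    simp only [hhdef]; linarith
  have hhmono : Monotone hh := by
    intro s u hsu
    simp only [hhdef]
    have := setIntegral_mono_set (hKi.integrableOn)
      (Filter.Eventually.of_forall hKnn) (HasSubset.Subset.eventuallyLE (hAAmono hsu))
    linarith
  have hhtend : Tendsto hh (𝓝[>] (0:ℝ)) (𝓝 0) := by
    have h1 := tendsto_setIntegral_shrink hKi hKnn AA hAAmono hAAmeas ?_
    · have h2 := h1.const_mul (2:ℝ)
      simpa [hhdef] using h2
    · filter_upwards with z
      by_cases hz : φ t₀ (x₀ + z) < ℓ₀
      · obtain ⟨n, hn⟩ := exists_nat_one_div_lt (by linarith : (0:ℝ) < ℓ₀ - φ t₀ (x₀ + z))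
        exact ⟨n, fun hmem => by
          simp only [hAAdef, mem_setOf_eq] at hmem
          have : (1:ℝ)/(n+1) < ℓ₀ - φ t₀ (x₀ + z) := by exact_mod_cast hn
          linarith [hmem.1]⟩
      · exact ⟨0, fun hmem => hz hmem.2⟩
  set c₁ : ℝ := 3 * (L₁ + 1) with hc₁def
  have hc₁pos : 0 < c₁ := by positivity
  set CK : ℝ := max Ktot 1 with hCKdef
  have hCKnn : (0:ℝ) ≤ CK := le_trans zero_le_one (le_max_right _ _)
  set o : ℝ → ℝ → ℝ := fun ε r => if 0 < ε ∧ 0 < r then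
      (1 + ‖g₀‖) * (hh (c₁ * (r + ε ^ ((1:ℝ)/2))) + ε ^ ((1:ℝ)/2))
        + CK * L₂ * (r + ε ^ ((1:ℝ)/2)) else 0 with hodef
  have honn : ∀ ε r, 0 ≤ o ε r := by
    intro ε r
    simp only [hodef]
    split
    · rename_i hcond
      have h1 : (0:ℝ) ≤ ε ^ ((1:ℝ)/2) := Real.rpow_nonneg hcond.1.le _
      have h2 : (0:ℝ) ≤ r + ε ^ ((1:ℝ)/2) := add_nonneg hcond.2.le h1
      have h3 := hhnn (c₁ * (r + ε ^ ((1:ℝ)/2)))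
      have h4 : (0:ℝ) ≤ 1 + ‖g₀‖ := by positivity
      have h5 : (0:ℝ) ≤ CK * L₂ := mul_nonneg hCKnn hL₂nn
      linarith [mul_nonneg h4 (add_nonneg h3 h1), mul_nonneg h5 h2]
    · exact le_refl 0
  refine ⟨o, honn, ?_, ?_⟩
  · -- the modulus tends to zero
    have hsq : Tendsto (fun p : ℝ × ℝ => p.1 ^ ((1:ℝ)/2))
        (𝓝[Ioi (0:ℝ) ×ˢ Ioi (0:ℝ)] ((0:ℝ),(0:ℝ))) (𝓝 0) := by
      have h1 : Tendsto (fun p : ℝ × ℝ => p.1)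
          (𝓝[Ioi (0:ℝ) ×ˢ Ioi (0:ℝ)] ((0:ℝ),(0:ℝ))) (𝓝 0) :=
        (continuous_fst.tendsto _).mono_left nhdsWithin_le_nhds
      have h2 : ContinuousAt (fun u : ℝ => u ^ ((1:ℝ)/2)) 0 :=
        Real.continuousAt_rpow_const 0 _ (Or.inr (by norm_num))
      have h3 := h2.tendsto.comp h1
      rw [Real.zero_rpow (by norm_num : ((1:ℝ)/2) ≠ 0)] at h3
      exact h3
    have hsnd : Tendsto (fun p : ℝ × ℝ => p.2)
        (𝓝[Ioi (0:ℝ) ×ˢ Ioi (0:ℝ)] ((0:ℝ),(0:ℝ))) (𝓝 0) :=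
      (continuous_snd.tendsto _).mono_left nhdsWithin_le_nhds
    have homeg : Tendsto (fun p : ℝ × ℝ => c₁ * (p.2 + p.1 ^ ((1:ℝ)/2)))
        (𝓝[Ioi (0:ℝ) ×ˢ Ioi (0:ℝ)] ((0:ℝ),(0:ℝ))) (𝓝[>] (0:ℝ)) := by
      rw [tendsto_nhdsWithin_iff]
      constructor
      · have h4 := (hsnd.add hsq).const_mul c₁
        simpa using h4
      · filter_upwards [self_mem_nhdsWithin] with p hp
        have hp1 : (0:ℝ) < p.1 := hp.1
        have hp2 : (0:ℝ) < p.2 := hp.2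
        have h5 : (0:ℝ) ≤ p.1 ^ ((1:ℝ)/2) := Real.rpow_nonneg hp1.le _
        have h6 : (0:ℝ) < p.2 + p.1 ^ ((1:ℝ)/2) := by linarith
        exact mul_pos hc₁pos h6
    have hfin : Tendsto (fun p : ℝ × ℝ =>
        (1 + ‖g₀‖) * (hh (c₁ * (p.2 + p.1 ^ ((1:ℝ)/2))) + p.1 ^ ((1:ℝ)/2))
          + CK * L₂ * (p.2 + p.1 ^ ((1:ℝ)/2)))
        (𝓝[Ioi (0:ℝ) ×ˢ Ioi (0:ℝ)] ((0:ℝ),(0:ℝ))) (𝓝 0) := by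
      have h1 := hhtend.comp homeg
      have h2 := ((h1.add hsq).const_mul (1 + ‖g₀‖)).add ((hsnd.add hsq).const_mul (CK * L₂))
      simpa using h2
    apply Tendsto.congr' _ hfin
    filter_upwards [self_mem_nhdsWithin] with p hp
    have hp1 : (0:ℝ) < p.1 := hp.1
    have hp2 : (0:ℝ) < p.2 := hp.2
    rw [hodef]
    simp only [if_pos (And.intro hp1 hp2)]
  · refine ⟨min (min 1 (((T - t₀)/8)^2)) ((1/(Ktot+1))^2), ?_, min (min 1 (t₀/2)) ((T - t₀)/8),
      ?_, ?_⟩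
    · have h1 : (0:ℝ) < T - t₀ := by linarith [ht₀.2]
      have h2 : (0:ℝ) < Ktot + 1 := by linarith
      positivity
    · have h1 : (0:ℝ) < T - t₀ := by linarith [ht₀.2]
      have h2 : (0:ℝ) < t₀ := ht₀.1
      positivity
    · intro ε hε r hr t x hdist y ψ hyψ hgrad hκpos hInf
      obtain ⟨hε0, hεlt⟩ := hε
      obtain ⟨hr0, hrlt⟩ := hr
      have hε1 : ε < 1 := lt_of_lt_of_le hεlt (le_trans (min_le_left _ _) (min_le_left _ _))
      have hεa : ε ≤ ((T - t₀)/8)^2 :=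
        le_of_lt (lt_of_lt_of_le hεlt (le_trans (min_le_left _ _) (min_le_right _ _)))
      have hεb : ε ≤ (1/(Ktot+1))^2 := le_of_lt (lt_of_lt_of_le hεlt (min_le_right _ _))
      have hr1 : r < 1 := lt_of_lt_of_le hrlt (le_trans (min_le_left _ _) (min_le_left _ _))
      have hr2 : r ≤ t₀/2 :=
        le_of_lt (lt_of_lt_of_le hrlt (le_trans (min_le_left _ _) (min_le_right _ _)))
      have hr3 : r ≤ (T - t₀)/8 := le_of_lt (lt_of_lt_of_le hrlt (min_le_right _ _))
      have hTt₀ : 0 < T - t₀ := by linarith [ht₀.2]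
      set sε : ℝ := ε ^ ((1:ℝ)/2) with hsεdef
      have hsε_sqrt : sε = Real.sqrt ε := by rw [hsεdef, Real.sqrt_eq_rpow]
      have hsε_pos : 0 < sε := by rw [hsε_sqrt]; exact Real.sqrt_pos.2 hε0
      have hsε_sq : sε * sε = ε := by rw [hsε_sqrt]; exact Real.mul_self_sqrt hε0.le
      clear_value sε
      have hsε_le1 : sε ≤ 1 := by
        rw [hsε_sqrt]
        calc Real.sqrt ε ≤ Real.sqrt 1 := Real.sqrt_le_sqrt hε1.le
          _ = 1 := Real.sqrt_one
      have hε_le_sε : ε ≤ sε := by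
        rw [hsε_sqrt]
        have h1 : ε * ε ≤ ε := by
          calc ε * ε ≤ 1 * ε := mul_le_mul_of_nonneg_right hε1.le hε0.le
            _ = ε := one_mul ε
        calc ε = Real.sqrt (ε * ε) := (Real.sqrt_mul_self hε0.le).symm
          _ ≤ Real.sqrt ε := Real.sqrt_le_sqrt h1
      have hsε8 : sε ≤ (T - t₀)/8 := by
        rw [hsε_sqrt]
        calc Real.sqrt ε ≤ Real.sqrt (((T - t₀)/8)^2) := Real.sqrt_le_sqrt hεa
          _ = (T - t₀)/8 := Real.sqrt_sq (by positivity)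
      have hsεK : (Ktot + 1) * sε ≤ 1 := by
        have h2 : (0:ℝ) < Ktot + 1 := by linarith
        have h1 : sε ≤ 1/(Ktot+1) := by
          rw [hsε_sqrt]
          calc Real.sqrt ε ≤ Real.sqrt ((1/(Ktot+1))^2) := Real.sqrt_le_sqrt hεb
            _ = 1/(Ktot+1) := Real.sqrt_sq (by positivity)
        rw [le_div_iff₀ h2] at h1
        linarith
      have hεpow : ∀ n : ℕ, 1 ≤ n → ε^n ≤ sε := by
        intro n hn
        calc ε^n ≤ ε^1 := pow_le_pow_of_le_one hε0.le hε1.le hn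
          _ = ε := pow_one ε
          _ ≤ sε := hε_le_sε
      have hε2_le_sε : ε^2 ≤ sε := hεpow 2 (by norm_num)
      have hε3_le_sε : ε^3 ≤ sε := hεpow 3 (by norm_num)
      rw [Prod.dist_eq] at hdist
      have ht_t₀ : |t - t₀| < r := by
        rw [← Real.dist_eq]; exact lt_of_le_of_lt (le_max_left _ _) hdist
      have hx_x₀ : ‖x - x₀‖ < r := by
        rw [← dist_eq_norm]; exact lt_of_le_of_lt (le_max_right _ _) hdist
      obtain ⟨hyball, hψC2, hψxy⟩ := hyψ
      have hyx : ‖y - x‖ < ε := by rw [← dist_eq_norm]; exact mem_ball.1 hyball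
      have hyx₀ : ‖y - x₀‖ < ε + r := by
        calc ‖y - x₀‖ = ‖(y - x) + (x - x₀)‖ := by rw [sub_add_sub_cancel]
          _ ≤ ‖y - x‖ + ‖x - x₀‖ := norm_add_le _ _
          _ < ε + r := by linarith
      -- representation of the curvature of ψ
      set σψ : Euc N → ℝ := fun z => if ψ y ≤ ψ (y + z) then (1:ℝ) else -1 with hσψdef
      have hκrep : kSt K ψ y = ∫ z, K z * σψ z := kSt_eq hN hKi hKnn hψC2.continuous y
      set κ : ℝ := kSt K ψ y with hκdef
      have hσψmeas : MeasurableSet {z : Euc N | ψ y ≤ ψ (y + z)} :=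
        measurableSet_le measurable_const
          ((hψC2.continuous.comp (continuous_const.add continuous_id)).measurable)
      have hκψint : Integrable (fun z => K z * σψ z) volume := by
        have h1 := Ksigma_integrable hKi hσψmeas
        simpa [hσψdef] using h1
      have hκKtot : κ ≤ Ktot := by
        rw [hκrep, hKtotdef]
        apply integral_mono hκψint hKi
        intro z
        simp only [hσψdef]
        by_cases h : ψ y ≤ ψ (y + z)
        · simp [h]
        · simp only [h, if_false]
          rw [mul_neg_one]
          linarith [hKnn z]
      have hκpos' : 0 < κ := hκpos
      have hcond : gradient ψ y ≠ 0 ∧ 0 < kSt K ψ y := ⟨hgrad, hκpos⟩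
      have h32 : ε ^ ((3:ℝ)/2) = ε * sε := by
        rw [hsεdef, show (3:ℝ)/2 = 1 + 1/2 by norm_num, Real.rpow_add hε0, Real.rpow_one]
      have hTP : TPg K ε y ψ = min (ε / κ) sε := by
        rw [TPg, if_pos hcond, cutC]
        rw [show ε ^ ((1:ℝ)/2) = sε from hsεdef.symm]
        congr 1
        apply max_eq_left
        rw [le_div_iff₀ hκpos']
        calc ε ^ ((3:ℝ)/2) * κ = ε * (κ * sε) := by rw [h32]; ring
          _ ≤ ε * ((Ktot+1) * sε) := by
              apply mul_le_mul_of_nonneg_left _ hε0.le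
              exact mul_le_mul_of_nonneg_right (by linarith [hκKtot]) hsε_pos.le
          _ ≤ ε * 1 := mul_le_mul_of_nonneg_left hsεK hε0.le
          _ = ε := mul_one ε
      rw [hTP] at hInf ⊢
      set T' : ℝ := min (ε / κ) sε with hT'def
      have hT'pos : 0 < T' := lt_min (div_pos hε0 hκpos') hsε_pos
      have hT'sε : T' ≤ sε := min_le_right _ _
      set m : ℝ := ε / T' with hmdef
      have hεm : ε = T' * m := by rw [hmdef]; field_simp
      have hm_cases : m = κ ∨ m = sε := by
        rcases le_total (ε / κ) sε with h | h
        · left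
          rw [hmdef, hT'def, min_eq_left h, eq_comm, eq_div_iff (ne_of_gt (div_pos hε0 hκpos')),
            mul_comm, div_mul_cancel₀ _ hκpos'.ne']
        · right
          rw [hmdef, hT'def, min_eq_right h, eq_comm, eq_div_iff hsε_pos.ne']
          exact hsε_sq
      have hm_nonneg : 0 ≤ m := div_nonneg hε0.le hT'pos.le
      have hmCK : m ≤ CK := by
        rcases hm_cases with h | h
        · rw [h, hCKdef]; exact le_trans hκKtot (le_max_left _ _)
        · rw [h, hCKdef]; exact le_trans hsε_le1 (le_max_right _ _)
      -- time membership
      have htmem : ∀ s : ℝ, 0 < s → s ≤ sε →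
          (t + s ∈ Icc (t₀/2) ((t₀+T)/2) ∧ t + s ∈ Ioc (0:ℝ) T) := by
        intro s hs1 hs2
        have h1 := (abs_lt.1 ht_t₀).1
        have h2 := (abs_lt.1 ht_t₀).2
        have h3 : t₀/2 < t := by linarith
        refine ⟨⟨by linarith, by linarith⟩, ⟨by linarith [ht₀.1], by linarith [ht₀.2]⟩⟩
      have htT' := htmem T' hT'pos hT'sε
      have htε2 := htmem (ε^2) (by positivity) hε2_le_sε
      -- facts about Pplus
      have hPP : Pplus K R x y ψ = {z | z ∈ ball y R ∧ ψ y ≤ ψ z} := by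
        rw [Pplus, if_pos hcond]
      have hyPP : y ∈ Pplus K R x y ψ := by
        rw [hPP]; exact ⟨mem_ball_self hR, le_refl _⟩
      have hzPP : ∀ z : Euc N, ‖z‖ < R → ψ y ≤ ψ (y + z) → y + z ∈ Pplus K R x y ψ := by
        intro z hz1 hz2
        rw [hPP]
        refine ⟨?_, hz2⟩
        rw [mem_ball, dist_eq_norm, add_sub_cancel_left]
        exact hz1
      have hbdd : BddBelow ((fun z => φ (t + T') z) '' Pplus K R x y ψ) := by
        refine ⟨-M, ?_⟩
        rintro a ⟨z, hz, rfl⟩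
        have h1 := hM (t + T') htT'.2 z
        linarith [(abs_le.1 h1).1]
      have hInf_le : ∀ z ∈ Pplus K R x y ψ,
          sInf ((fun z => φ (t + T') z) '' Pplus K R x y ψ) ≤ φ (t + T') z :=
        fun z hz => csInf_le hbdd ⟨z, hz, rfl⟩
      set ω : ℝ := r + sε with hωdef
      have hωpos : 0 < ω := by rw [hωdef]; linarith
      -- membership in D
      have hmx₀D : ∀ z : Euc N, ‖z‖ ≤ R → ((t₀, x₀ + z) : ℝ × Euc N) ∈ D := by
        intro z hz
        refine ⟨⟨by linarith [ht₀.1], by linarith [ht₀.2]⟩, ?_⟩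
        rw [mem_closedBall, dist_eq_norm, add_sub_cancel_left]
        linarith
      have hmx₀D0 : ((t₀, x₀) : ℝ × Euc N) ∈ D := by
        refine ⟨⟨by linarith [ht₀.1], by linarith [ht₀.2]⟩, mem_closedBall_self (by linarith)⟩
      have hmyD : ∀ z : Euc N, ‖z‖ ≤ R → ((t + T', y + z) : ℝ × Euc N) ∈ D := by
        intro z hz
        refine ⟨htT'.1, ?_⟩
        rw [mem_closedBall, dist_eq_norm]
        calc ‖y + z - x₀‖ = ‖(y - x₀) + z‖ := by rw [add_sub_right_comm]
          _ ≤ ‖y - x₀‖ + ‖z‖ := norm_add_le _ _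
          _ ≤ R + 2 := by linarith
      have hmyD0 : ((t + T', y) : ℝ × Euc N) ∈ D := by
        refine ⟨htT'.1, ?_⟩
        rw [mem_closedBall, dist_eq_norm]
        linarith
      have hmxD : ((t + ε^2, x) : ℝ × Euc N) ∈ D := by
        refine ⟨htε2.1, ?_⟩
        rw [mem_closedBall, dist_eq_norm]
        linarith
      -- Lipschitz estimates for values of φ
      have hLφ : ∀ (s₁ s₂ : ℝ) (z₁ z₂ : Euc N), (s₁, z₁) ∈ D → (s₂, z₂) ∈ D →
          |φ s₁ z₁ - φ s₂ z₂| ≤ L₁ * max |s₁ - s₂| ‖z₁ - z₂‖ := by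
        intro s₁ s₂ z₁ z₂ h1 h2
        have h3 := hLip1 (s₁, z₁) h1 (s₂, z₂) h2
        have h4 : ‖((s₁, z₁) : ℝ × Euc N) - (s₂, z₂)‖ = max |s₁ - s₂| ‖z₁ - z₂‖ := by
          rw [Prod.mk_sub_mk, Prod.norm_def, Real.norm_eq_abs]
        rw [h4] at h3
        exact h3
      have habsT : |t + T' - t₀| ≤ ω := by
        have h1 := (abs_lt.1 ht_t₀).1
        have h2 := (abs_lt.1 ht_t₀).2
        rw [hωdef, abs_le]
        constructor <;> [linarith; linarith [hT'sε]]
      have habsε2 : |t + ε^2 - t₀| ≤ ω := by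
        have h1 := (abs_lt.1 ht_t₀).1
        have h2 := (abs_lt.1 ht_t₀).2
        rw [hωdef, abs_le]
        have h3 : (0:ℝ) ≤ ε^2 := sq_nonneg ε
        constructor
        · linarith
        · linarith [hε2_le_sε]
      have hyx₀ω : ‖y - x₀‖ ≤ ω := by rw [hωdef]; linarith [hε_le_sε]
      -- the superlevel set of ψ is contained in an approximate superlevel set of φ t₀
      have hG_incl : ∀ z : Euc N, ‖z‖ < R → ψ y ≤ ψ (y + z) →
          ℓ₀ - c₁ * ω ≤ φ t₀ (x₀ + z) := by
        intro z hz1 hz2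
        have h1 : sInf ((fun z => φ (t + T') z) '' Pplus K R x y ψ) ≤ φ (t + T') (y + z) :=
          hInf_le _ (hzPP z hz1 hz2)
        have h2 : φ (t + ε^2) x - ε^3 < φ (t + T') (y + z) := lt_of_lt_of_le hInf h1
        have h3 := hLφ (t + T') t₀ (y + z) (x₀ + z) (hmyD z hz1.le) (hmx₀D z hz1.le)
        have h4 := hLφ (t + ε^2) t₀ x x₀ hmxD hmx₀D0
        have h5 : max |t + T' - t₀| ‖(y + z) - (x₀ + z)‖ ≤ ω := by
          apply max_le habsT
          rw [add_sub_add_right_eq_sub]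
          exact hyx₀ω
        have h6 : max |t + ε^2 - t₀| ‖x - x₀‖ ≤ ω := by
          apply max_le habsε2
          rw [hωdef]; linarith
        have h7 : |φ (t + T') (y + z) - φ t₀ (x₀ + z)| ≤ L₁ * ω :=
          le_trans h3 (mul_le_mul_of_nonneg_left h5 hL₁nn)
        have h8 : |φ (t + ε^2) x - φ t₀ x₀| ≤ L₁ * ω :=
          le_trans h4 (mul_le_mul_of_nonneg_left h6 hL₁nn)
        have h9 := abs_le.1 h7
        have h10 := abs_le.1 h8
        have hc₁ω : (2*L₁+1) * ω ≤ c₁ * ω := by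
          apply mul_le_mul_of_nonneg_right _ hωpos.le
          rw [hc₁def]; linarith
        have hε3ω : ε^3 ≤ ω := by rw [hωdef]; linarith [hε3_le_sε]
        have hl0 : φ t₀ x₀ = ℓ₀ := hℓ₀def.symm
        rw [hl0] at h10
        linarith [h9.1, h9.2, h10.1, h10.2]
      -- comparison of curvatures
      set σG : Euc N → ℝ := fun z => if ℓ₀ - c₁ * ω ≤ φ t₀ (x₀ + z) then (1:ℝ) else -1
        with hσGdef
      set σ₀ : Euc N → ℝ := fun z => if ℓ₀ ≤ φ t₀ (x₀ + z) then (1:ℝ) else -1 with hσ₀def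
      have hmeasφz : Measurable (fun z : Euc N => φ t₀ (x₀ + z)) :=
        (hφt₀cont.comp (continuous_const.add continuous_id)).measurable
      have hσGint : Integrable (fun z => K z * σG z) volume := by
        have h1 := Ksigma_integrable hKi (S := {z : Euc N | ℓ₀ - c₁ * ω ≤ φ t₀ (x₀ + z)})
          (measurableSet_le measurable_const hmeasφz)
        simpa [hσGdef] using h1
      have hσ₀int : Integrable (fun z => K z * σ₀ z) volume := by
        have h1 := Ksigma_integrable hKi (S := {z : Euc N | ℓ₀ ≤ φ t₀ (x₀ + z)})
          (measurableSet_le measurable_const hmeasφz)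
        simpa [hσ₀def] using h1
      have hκ₀rep : κ₀ = ∫ z, K z * σ₀ z := by
        have h1 := kSt_eq hN hKi hKnn hφt₀cont x₀
        rw [hκ₀def, h1]
      have hκ_le_G : κ ≤ ∫ z, K z * σG z := by
        rw [hκrep]
        apply integral_mono hκψint hσGint
        intro z
        by_cases hKz : K z = 0
        · simp only [hσψdef, hσGdef, hKz, zero_mul]
          exact le_refl 0
        · have hzR : ‖z‖ < R := by
            have h1 := hKsupp (Function.mem_support.2 hKz)
            rwa [mem_ball, dist_zero_right] at h1
          by_cases hS : ψ y ≤ ψ (y + z)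
          · have h2 := hG_incl z hzR hS
            simp only [hσψdef, hσGdef, if_pos hS, if_pos h2]
            exact le_refl _
          · simp only [hσψdef, hσGdef, if_neg hS]
            by_cases hG : ℓ₀ - c₁ * ω ≤ φ t₀ (x₀ + z)
            · rw [if_pos hG, mul_neg_one]; linarith [hKnn z]
            · rw [if_neg hG]
      have hptwise : ∀ z : Euc N, K z * σG z
          = K z * σ₀ z + (AA (c₁ * ω)).indicator (fun w => 2 * K w) z := by
        intro z
        simp only [hσGdef, hσ₀def, hAAdef, Set.indicator_apply, mem_setOf_eq]
        by_cases h1 : ℓ₀ ≤ φ t₀ (x₀ + z)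
        · have h2 : ℓ₀ - c₁ * ω ≤ φ t₀ (x₀ + z) := by
            linarith [mul_nonneg hc₁pos.le hωpos.le]
          rw [if_pos h1, if_pos h2, if_neg (by push_neg; exact fun _ => h1 : 
            ¬(ℓ₀ - c₁ * ω ≤ φ t₀ (x₀ + z) ∧ φ t₀ (x₀ + z) < ℓ₀))]
          ring
        · by_cases h2 : ℓ₀ - c₁ * ω ≤ φ t₀ (x₀ + z)
          · rw [if_pos h2, if_neg h1, if_pos ⟨h2, not_le.1 h1⟩]
            ring
          · rw [if_neg h2, if_neg h1, if_neg (fun hc => h2 hc.1)]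
            ring
      have hindint : Integrable ((AA (c₁ * ω)).indicator (fun w => 2 * K w)) volume :=
        ((hKi.const_mul 2).indicator (hAAmeas _))
      have hG_eq : ∫ z, K z * σG z = κ₀ + hh (c₁ * ω) := by
        have h1 : ∫ z, K z * σG z
            = (∫ z, K z * σ₀ z) + ∫ z, (AA (c₁ * ω)).indicator (fun w => 2 * K w) z := by
          rw [← integral_add hσ₀int hindint]
          exact integral_congr_ae (Filter.Eventually.of_forall hptwise)
        rw [h1, ← hκ₀rep]
        congr 1
        rw [integral_indicator (hAAmeas _), hhdef]
        simp only []
        exact integral_const_mul 2 K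
      have hκcomp : κ ≤ κ₀ + hh (c₁ * ω) := by rw [← hG_eq]; exact hκ_le_G
      -- gradient bound
      have hUmem1 : ((t + T', y) : ℝ × Euc N) ∈ U := hDU hmyD0
      have hUmem0 : ((t₀, x₀) : ℝ × Euc N) ∈ U := hDU hmx₀D0
      have hfd1 : fderiv ℝ (φ (t + T')) y = (fderiv ℝ F (t + T', y)).comp (sliceL N) :=
        fderiv_slice (hdiffU _ hUmem1)
      have hfd0 : fderiv ℝ (φ t₀) x₀ = (fderiv ℝ F (t₀, x₀)).comp (sliceL N) :=
        fderiv_slice (hdiffU _ hUmem0)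
      have hgnorm1 : ‖gradient (φ (t + T')) y‖ = ‖fderiv ℝ (φ (t + T')) y‖ :=
        LinearIsometryEquiv.norm_map _ _
      have hgnorm0 : ‖g₀‖ = ‖fderiv ℝ (φ t₀) x₀‖ := LinearIsometryEquiv.norm_map _ _
      have hfdiff_bound : ‖fderiv ℝ F (t + T', y) - fderiv ℝ F (t₀, x₀)‖ ≤ L₂ * ω := by
        have h1 := hLip2 (t + T', y) hmyD0 (t₀, x₀) hmx₀D0
        have h2 : ‖((t + T', y) : ℝ × Euc N) - (t₀, x₀)‖ ≤ ω := by
          rw [Prod.mk_sub_mk, Prod.norm_def, Real.norm_eq_abs]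
          exact max_le habsT hyx₀ω
        calc ‖fderiv ℝ F (t + T', y) - fderiv ℝ F (t₀, x₀)‖
            ≤ L₂ * ‖((t + T', y) : ℝ × Euc N) - (t₀, x₀)‖ := h1
          _ ≤ L₂ * ω := mul_le_mul_of_nonneg_left h2 hL₂nn
      have hgbound : ‖gradient (φ (t + T')) y‖ ≤ ‖g₀‖ + L₂ * ω := by
        rw [hgnorm1, hfd1, hgnorm0, hfd0]
        have h1 : (fderiv ℝ F (t + T', y)).comp (sliceL N)
            = (fderiv ℝ F (t₀, x₀)).comp (sliceL N)
              + (fderiv ℝ F (t + T', y) - fderiv ℝ F (t₀, x₀)).comp (sliceL N) := by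
          rw [ContinuousLinearMap.sub_comp]
          abel
        rw [h1]
        have h2 : ‖(fderiv ℝ F (t + T', y) - fderiv ℝ F (t₀, x₀)).comp (sliceL N)‖ ≤ L₂ * ω := by
          calc ‖(fderiv ℝ F (t + T', y) - fderiv ℝ F (t₀, x₀)).comp (sliceL N)‖
              ≤ ‖fderiv ℝ F (t + T', y) - fderiv ℝ F (t₀, x₀)‖ * ‖sliceL N‖ :=
                ContinuousLinearMap.opNorm_comp_le _ _
            _ ≤ ‖fderiv ℝ F (t + T', y) - fderiv ℝ F (t₀, x₀)‖ * 1 :=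
                mul_le_mul_of_nonneg_left (sliceL_norm_le (N := N)) (norm_nonneg _)
            _ ≤ L₂ * ω := by rw [mul_one]; exact hfdiff_bound
        calc ‖(fderiv ℝ F (t₀, x₀)).comp (sliceL N)
              + (fderiv ℝ F (t + T', y) - fderiv ℝ F (t₀, x₀)).comp (sliceL N)‖
            ≤ ‖(fderiv ℝ F (t₀, x₀)).comp (sliceL N)‖
              + ‖(fderiv ℝ F (t + T', y) - fderiv ℝ F (t₀, x₀)).comp (sliceL N)‖ :=
              norm_add_le _ _
          _ ≤ ‖(fderiv ℝ F (t₀, x₀)).comp (sliceL N)‖ + L₂ * ω := by linarith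
      -- the value of the modulus
      have hoval : o ε r = (1 + ‖g₀‖) * (hh (c₁ * ω) + sε) + CK * L₂ * ω := by
        rw [hodef]
        simp only [if_pos (And.intro hε0 hr0)]
        rw [← hsεdef, ← hωdef]
      have hone_add : (0:ℝ) ≤ 1 + ‖g₀‖ := by positivity
      have hhc₁ω := hhnn (c₁ * ω)
      -- the key inequality
      have hkey : ε * ‖gradient (φ (t + T')) y‖ ≤
          T' * ((if g₀ ≠ 0 then max κ₀ 0 * ‖g₀‖ else 0) + o ε r) := by
        have hb1 : m * ‖g₀‖ ≤ (if g₀ ≠ 0 then max κ₀ 0 * ‖g₀‖ else 0)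
            + (1 + ‖g₀‖) * (hh (c₁ * ω) + sε) := by
          by_cases hg : g₀ = 0
          · rw [if_neg (by simpa using hg), hg]
            simp only [norm_zero, mul_zero, add_zero, zero_add, one_mul]
            linarith [hhc₁ω, hsε_pos]
          · rw [if_pos hg]
            have hm_le : m ≤ max κ₀ 0 + (hh (c₁ * ω) + sε) := by
              rcases hm_cases with h | h
              · rw [h]
                calc κ ≤ κ₀ + hh (c₁ * ω) := hκcomp
                  _ ≤ max κ₀ 0 + (hh (c₁ * ω) + sε) := by
                    linarith [le_max_left κ₀ (0:ℝ), hsε_pos]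
              · rw [h]
                linarith [le_max_right κ₀ (0:ℝ), hhc₁ω]
            calc m * ‖g₀‖ ≤ (max κ₀ 0 + (hh (c₁ * ω) + sε)) * ‖g₀‖ :=
                mul_le_mul_of_nonneg_right hm_le (norm_nonneg _)
              _ = max κ₀ 0 * ‖g₀‖ + (hh (c₁ * ω) + sε) * ‖g₀‖ := by ring
              _ ≤ max κ₀ 0 * ‖g₀‖ + (1 + ‖g₀‖) * (hh (c₁ * ω) + sε) := by
                have h2 : (hh (c₁ * ω) + sε) * ‖g₀‖ ≤ (hh (c₁ * ω) + sε) * (1 + ‖g₀‖) :=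
                  mul_le_mul_of_nonneg_left (by linarith [norm_nonneg g₀])
                    (by linarith [hhc₁ω, hsε_pos])
                have h3 : (hh (c₁ * ω) + sε) * (1 + ‖g₀‖) = (1 + ‖g₀‖) * (hh (c₁ * ω) + sε) :=
                  mul_comm _ _
                linarith
        have hb2 : m * (L₂ * ω) ≤ CK * L₂ * ω := by
          calc m * (L₂ * ω) ≤ CK * (L₂ * ω) :=
              mul_le_mul_of_nonneg_right hmCK (mul_nonneg hL₂nn hωpos.le)
            _ = CK * L₂ * ω := by ring
        calc ε * ‖gradient (φ (t + T')) y‖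
            = T' * (m * ‖gradient (φ (t + T')) y‖) := by rw [hεm]; ring
          _ ≤ T' * (m * (‖g₀‖ + L₂ * ω)) := by
            apply mul_le_mul_of_nonneg_left _ hT'pos.le
            exact mul_le_mul_of_nonneg_left hgbound hm_nonneg
          _ = T' * (m * ‖g₀‖ + m * (L₂ * ω)) := by ring
          _ ≤ T' * ((if g₀ ≠ 0 then max κ₀ 0 * ‖g₀‖ else 0) + o ε r) := by
            apply mul_le_mul_of_nonneg_left _ hT'pos.le
            rw [hoval]
            linarith [hb1, hb2]
      constructor
      · have h1 : sInf ((fun z => φ (t + T') z) '' Pplus K R x y ψ) - φ (t + T') y ≤ 0 :=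
          sub_nonpos.2 (hInf_le y hyPP)
        have h2 : 0 ≤ T' * ((if g₀ ≠ 0 then max κ₀ 0 * ‖g₀‖ else 0) + o ε r)
            - ε * ‖gradient (φ (t + T')) y‖ := sub_nonneg.2 hkey
        linarith
      · intro hg
        refine ⟨?_, rfl⟩
        have h1 : hh (c₁ * ω) ≤ o ε r := by
          rw [hoval]
          have e1 : hh (c₁ * ω) + sε ≤ (1 + ‖g₀‖) * (hh (c₁ * ω) + sε) :=
            le_mul_of_one_le_left (by linarith [hhc₁ω, hsε_pos]) (by linarith [norm_nonneg g₀])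
          have e2 : (0:ℝ) ≤ CK * L₂ * ω :=
            mul_nonneg (mul_nonneg hCKnn hL₂nn) hωpos.le
          linarith
        linarith [hκcomp]
end
end
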